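/- arXiv:1703.02100 — 11 statements merged into one kernel-verified Lean document; each statement's English description precedes it below -/
import Mathlib

section
/- Let V be a finite ground set, F a nonnegative, normalized, nondecreasing set function on V, let γ ∈ (0,1] be such that F has submodularity ratio at least γ, and let α ∈ (0,1] be such that F has generalized curvature at most α. Let K ≥ 1, let ∅ = S⁰ ⊂ S¹ ⊂ ⋯ ⊂ S^K be a greedy sequence of length K for F, and let Ω* ⊆ V be any set with |Ω*| ≤ K. Then F(S^K) ≥ (1/α)·[1 − ((K − αγ)/K)^K]·F(Ω*) ≥ (1/α)·(1 − e^{−αγ})·F(Ω*). -/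
open Finset

set_option linter.unusedSectionVars false

/-- Invariant function. -/
noncomputable def Nf (α γ : ℝ) (r k : ℕ) : ℝ :=
  if k = 0 then 0 else max ((1 - α * γ / (k : ℝ)) ^ r) (1 - α)

section NfLemmas

variable {α γ : ℝ} (hγ0 : 0 < γ) (hγ1 : γ ≤ 1) (hα0 : 0 < α) (hα1 : α ≤ 1)
include hγ0 hγ1 hα0 hα1

lemma q_nonneg {k : ℕ} (hk : 1 ≤ k) : 0 ≤ 1 - α * γ / (k : ℝ) := by
  have hk' : (1 : ℝ) ≤ (k : ℝ) := by exact_mod_cast hk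
  have h1 : α * γ ≤ 1 := mul_le_one₀ hα1 hγ0.le hγ1
  have h2 : α * γ / (k : ℝ) ≤ α * γ := by
    apply div_le_self (by positivity) hk'
  linarith

lemma q_le_one (k : ℕ) : 1 - α * γ / (k : ℝ) ≤ 1 := by
  have : 0 ≤ α * γ / (k : ℝ) := by positivity
  linarith

lemma Nf_nonneg (r k : ℕ) : 0 ≤ Nf α γ r k := by
  unfold Nf
  split
  · exact le_refl _
  · exact le_trans (by linarith) (le_max_right _ _)

lemma Nf_le_one (r k : ℕ) : Nf α γ r k ≤ 1 := by
  unfold Nf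
  split
  · norm_num
  · rename_i hk
    apply max_le _ (by linarith)
    apply pow_le_one₀ (q_nonneg hγ0 hγ1 hα0 hα1 (Nat.one_le_iff_ne_zero.mpr hk))
      (q_le_one hγ0 hγ1 hα0 hα1 k)

/-- Non-overlap numeric step. -/
lemma Nf_nonover (r k : ℕ) :
    (1 - α * γ / (k : ℝ)) * Nf α γ r k ≤ Nf α γ (r + 1) k := by
  unfold Nf
  split
  · simp
  · rename_i hk
    have hk1 : 1 ≤ k := Nat.one_le_iff_ne_zero.mpr hk
    have hq0 : 0 ≤ 1 - α * γ / (k : ℝ) := q_nonneg hγ0 hγ1 hα0 hα1 hk1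
    have hq1 : 1 - α * γ / (k : ℝ) ≤ 1 := q_le_one hγ0 hγ1 hα0 hα1 k
    rcases le_total ((1 - α * γ / (k : ℝ)) ^ r) (1 - α) with h | h
    · rw [max_eq_right h]
      refine le_trans ?_ (le_max_right _ _)
      nlinarith
    · rw [max_eq_left h]
      refine le_trans ?_ (le_max_left _ _)
      rw [pow_succ]
      nlinarith [pow_nonneg hq0 r]

/-- Key power inequality used for the overlap step. -/
lemma aux_pow (p q g c : ℝ) (hp0 : 0 ≤ p) (hpq : p ≤ q) (hq1 : q ≤ 1)
    (hg0 : 0 ≤ g) (hg1 : g ≤ 1) (hc0 : 0 ≤ c)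
    (hbase : (1 - g) + g * c ≤ q) (hstep : (1 - p) * (g * c) ≤ (q - p) * c) :
    ∀ r : ℕ, (1 - g) * p ^ r + g * c ≤ max (q ^ (r + 1)) c := by
  intro r
  induction r with
  | zero =>
    simp only [pow_zero, mul_one, zero_add, pow_one]
    exact le_trans hbase (le_max_left _ _)
  | succ r ih =>
    by_cases h : q ^ (r + 1) ≤ c
    · rw [max_eq_right h] at ih
      refine le_trans ?_ (le_max_right _ _)
      have h1 : (1 - g) * p ^ (r + 1) ≤ p * (c - g * c) := by
        rw [pow_succ]
        nlinarith [pow_nonneg hp0 r]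
      nlinarith
    · push_neg at h
      rw [max_eq_left h.le] at ih
      refine le_trans ?_ (le_max_left _ _)
      have hq0 : 0 ≤ q := le_trans hp0 hpq
      have e1 : (1 - g) * p ^ (r + 1) + g * c
          = p * ((1 - g) * p ^ r + g * c) + (1 - p) * (g * c) := by ring
      rw [e1]
      have h2 : p * ((1 - g) * p ^ r + g * c) ≤ p * q ^ (r + 1) :=
        mul_le_mul_of_nonneg_left ih hp0
      have h3 : (q - p) * c ≤ (q - p) * q ^ (r + 1) :=
        mul_le_mul_of_nonneg_left h.le (by linarith)
      have e2 : q ^ (r + 1 + 1) = p * q ^ (r + 1) + (q - p) * q ^ (r + 1) := by ring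
      rw [e2]
      linarith

/-- Overlap numeric step: `k = m + 1 ≥ 1`. -/
lemma Nf_over (r m : ℕ) :
    (1 - γ / ((m : ℝ) + 1)) * max (Nf α γ r m) (1 - α) + (γ / ((m : ℝ) + 1)) * (1 - α)
      ≤ Nf α γ (r + 1) (m + 1) := by
  have hc0 : (0 : ℝ) ≤ 1 - α := by linarith
  have hNf : Nf α γ (r+1) (m+1) = max ((1 - α * γ / ((m:ℝ)+1)) ^ (r+1)) (1 - α) := by
    unfold Nf
    rw [if_neg (Nat.succ_ne_zero m)]
    push_cast
    ring_nf
  rcases Nat.eq_zero_or_pos m with hm | hm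
  · subst hm
    have : Nf α γ r 0 = 0 := by unfold Nf; simp
    rw [this, max_eq_right hc0, hNf]
    refine le_trans (le_of_eq (by ring)) (le_max_right _ _)
  · -- m ≥ 1
    have hm1 : (1:ℝ) ≤ (m:ℝ) := by exact_mod_cast hm
    have hNf' : Nf α γ r m = max ((1 - α * γ / (m:ℝ)) ^ r) (1 - α) := by
      unfold Nf; rw [if_neg (Nat.pos_iff_ne_zero.mp hm)]
    rw [hNf', max_assoc, max_self, hNf]
    set p := 1 - α * γ / (m : ℝ) with hp
    set q := 1 - α * γ / ((m : ℝ) + 1) with hq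
    set g := γ / ((m : ℝ) + 1) with hg
    have hm0 : (0:ℝ) < (m:ℝ) := by linarith
    have hm10 : (0:ℝ) < (m:ℝ) + 1 := by linarith
    have hp0 : 0 ≤ p := q_nonneg hγ0 hγ1 hα0 hα1 hm
    have hpq : p ≤ q := by
      rw [hp, hq]
      have : α * γ / ((m:ℝ)+1) ≤ α * γ / (m:ℝ) :=
        div_le_div_of_nonneg_left (by positivity) hm0 (by linarith)
      linarith
    have hq1 : q ≤ 1 := by
      have : 0 ≤ α * γ / ((m:ℝ)+1) := by positivity
      rw [hq]; linarith
    have hg0 : 0 ≤ g := by rw [hg]; positivity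
    have hg1 : g ≤ 1 := by
      rw [hg, div_le_one hm10]; linarith
    have hbase : (1 - g) + g * (1 - α) ≤ q := le_of_eq (by rw [hg, hq]; ring)
    have hstep : (1 - p) * (g * (1 - α)) ≤ (q - p) * (1 - α) := by
      have e1 : (1 - p) * (g * (1 - α)) = (α * γ * γ / ((m:ℝ) * ((m:ℝ)+1))) * (1 - α) := by
        rw [hp, hg]; field_simp; ring
      have e2 : (q - p) * (1 - α) = (α * γ / ((m:ℝ) * ((m:ℝ)+1))) * (1 - α) := by
        rw [hp, hq]; field_simp; ring
      rw [e1, e2]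
      apply mul_le_mul_of_nonneg_right _ hc0
      apply div_le_div_of_nonneg_right ?_ (by positivity)
      nlinarith [mul_pos hα0 hγ0]
    rcases le_total (p ^ r) (1 - α) with h | h
    · rw [max_eq_right h]
      refine le_trans (le_of_eq (by ring)) (le_max_right _ _)
    · rw [max_eq_left h]
      exact aux_pow hγ0 hγ1 hα0 hα1 p q g (1 - α) hp0 hpq hq1 hg0 hg1 hc0 hbase hstep r

end NfLemmas


set_option maxHeartbeats 1000000

/-- **Approximation guarantee for Greedy on non-submodular functions.**
If `F` is nonnegative, normalized, nondecreasing, with submodularity ratio at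
least `γ ∈ (0,1]` and generalized curvature at most `α ∈ (0,1]`, and
`∅ = S⁰ ⊂ ⋯ ⊂ S^K` is a greedy sequence, then for any `Ω*` with `|Ω*| ≤ K`,
`F(S^K) ≥ (1/α)(1 − ((K−αγ)/K)^K) F(Ω*) ≥ (1/α)(1 − e^{−αγ}) F(Ω*)`. -/
theorem greedy_approximation_guarantee
    {V : Type*} [DecidableEq V] [Fintype V]
    (F : Finset V → ℝ) (γ α : ℝ)
    (hγ0 : 0 < γ) (hγ1 : γ ≤ 1) (hα0 : 0 < α) (hα1 : α ≤ 1)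
    (hF0 : F ∅ = 0)
    (hFnonneg : ∀ S : Finset V, 0 ≤ F S)
    (hFmono : ∀ A B : Finset V, A ⊆ B → F A ≤ F B)
    (hratio : ∀ Ω S : Finset V,
      ∑ ω ∈ Ω \ S, (F (insert ω S) - F S) ≥ γ * (F (S ∪ Ω) - F S))
    (hcurv : ∀ Ω S : Finset V, ∀ i ∈ S, i ∉ Ω →
      F (insert i ((S.erase i) ∪ Ω)) - F ((S.erase i) ∪ Ω) ≥
        (1 - α) * (F S - F (S.erase i)))
    (K : ℕ) (hK : 1 ≤ K)
    (S : ℕ → Finset V) (j : ℕ → V)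
    (hS0 : S 0 = ∅)
    (hSstep : ∀ t < K, S (t + 1) = insert (j t) (S t))
    (hjnew : ∀ t < K, j t ∉ S t)
    (hgreedy : ∀ t < K, ∀ v ∉ S t,
      F (insert (j t) (S t)) - F (S t) ≥ F (insert v (S t)) - F (S t))
    (Ωopt : Finset V) (hΩ : Ωopt.card ≤ K) :
    F (S K) ≥ (1 / α) * (1 - (((K : ℝ) - α * γ) / K) ^ K) * F Ωopt ∧
      (1 / α) * (1 - (((K : ℝ) - α * γ) / K) ^ K) * F Ωopt ≥
        (1 / α) * (1 - Real.exp (-(α * γ))) * F Ωopt := by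
  have hαγ1 : α * γ ≤ 1 := mul_le_one₀ hα1 hγ0.le hγ1
  have hK0 : (0:ℝ) < (K:ℝ) := by exact_mod_cast hK
  -- chain monotonicity
  have hsub : ∀ t, t < K → S t ⊆ S (t+1) := fun t ht => by
    rw [hSstep t ht]; exact Finset.subset_insert _ _
  have hmono : ∀ b, b ≤ K → ∀ a, a ≤ b → S a ⊆ S b := by
    intro b
    induction b with
    | zero => intro _ a ha; simp [Nat.le_zero.mp ha]
    | succ n ih =>
      intro hb a ha
      rcases Nat.lt_or_ge a (n+1) with h | h
      · exact (ih (by omega) a (by omega)).trans (hsub n (by omega))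
      · have : a = n+1 := by omega
        subst this; exact subset_rfl
  -- main downward induction
  have main : ∀ d, d ≤ K →
      (1/α) * (1 - Nf α γ d ((Ωopt \ S (K-d)).card)) * (F (S (K-d) ∪ Ωopt) - F (S (K-d)))
        ≤ F (S K) - F (S (K-d)) := by
    intro d
    induction d with
    | zero =>
      intro _
      rw [Nat.sub_zero]
      by_cases hk : (Ωopt \ S K).card = 0
      · have hsubΩ : Ωopt ⊆ S K := by
          rw [← Finset.sdiff_eq_empty_iff_subset]; exact Finset.card_eq_zero.mp hk
        rw [Finset.union_eq_left.mpr hsubΩ]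
        simp
      · unfold Nf
        rw [if_neg hk, pow_zero, max_eq_left (by linarith : (1:ℝ) - α ≤ 1)]
        simp
    | succ d ih =>
      intro hdK
      have hdK' : d ≤ K := by omega
      have ht : K - (d+1) < K := by omega
      set t := K - (d+1) with htdef
      have ht1 : K - d = t + 1 := by omega
      have ihd := ih hdK'
      rw [ht1] at ihd
      have hstep := hSstep t ht
      have hjt := hjnew t ht
      have hsub1 : S t ⊆ S (t+1) := hsub t ht
      have hρ0 : 0 ≤ F (S (t+1)) - F (S t) := sub_nonneg.mpr (hFmono _ _ hsub1)
      have hD0 : 0 ≤ F (S t ∪ Ωopt) - F (S t) :=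
        sub_nonneg.mpr (hFmono _ _ Finset.subset_union_left)
      have hD'0 : 0 ≤ F (S (t+1) ∪ Ωopt) - F (S (t+1)) :=
        sub_nonneg.mpr (hFmono _ _ Finset.subset_union_left)
      have hsum : γ * (F (S t ∪ Ωopt) - F (S t))
          ≤ ((Ωopt \ S t).card : ℝ) * (F (S (t+1)) - F (S t)) := by
        have h1 := hratio Ωopt (S t)
        have h2 : ∑ ω ∈ Ωopt \ S t, (F (insert ω (S t)) - F (S t))
            ≤ (Ωopt \ S t).card • (F (S (t+1)) - F (S t)) := by
          apply Finset.sum_le_card_nsmul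
          intro ω hω
          have := hgreedy t ht ω (Finset.mem_sdiff.mp hω).2
          rw [hstep]
          linarith
        rw [nsmul_eq_mul] at h2
        linarith
      by_cases hk0 : (Ωopt \ S t).card = 0
      · -- optimum already contained in S t
        have hsubΩ : Ωopt ⊆ S t := by
          rw [← Finset.sdiff_eq_empty_iff_subset]
          exact Finset.card_eq_zero.mp hk0
        have hUeq : S t ∪ Ωopt = S t := Finset.union_eq_left.mpr hsubΩ
        have hFK : F (S t) ≤ F (S K) := hFmono _ _ (hmono K le_rfl t (by omega))
        rw [hUeq]
        have he0 : F (S t) - F (S t) = 0 := sub_self _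
        rw [he0, mul_zero]
        linarith
      · obtain ⟨m, hm⟩ : ∃ m, (Ωopt \ S t).card = m + 1 :=
          ⟨(Ωopt \ S t).card - 1, by omega⟩
        have hmcast : ((Ωopt \ S t).card : ℝ) = (m:ℝ) + 1 := by rw [hm]; push_cast; ring
        have hm10 : (0:ℝ) < (m:ℝ) + 1 := by positivity
        have hρD : γ / ((m:ℝ)+1) * (F (S t ∪ Ωopt) - F (S t)) ≤ F (S (t+1)) - F (S t) := by
          rw [div_mul_eq_mul_div, div_le_iff₀ hm10]
          rw [hmcast] at hsum
          linarith
        have hFKt1 : F (S t) ≤ F (S K) := hFmono _ _ (hmono K le_rfl t (by omega))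
        by_cases hov : j t ∈ Ωopt
        · -- overlap case
          have hU' : S (t+1) ∪ Ωopt = S t ∪ Ωopt := by
            rw [hstep, Finset.insert_union,
              Finset.insert_eq_self.mpr (Finset.mem_union_right _ hov)]
          have hsd : Ωopt \ S (t+1) = (Ωopt \ S t).erase (j t) := by
            rw [hstep]; ext x
            simp only [Finset.mem_sdiff, Finset.mem_insert, Finset.mem_erase]
            tauto
          have hk' : (Ωopt \ S (t+1)).card = m := by
            rw [hsd, Finset.card_erase_of_mem (Finset.mem_sdiff.mpr ⟨hov, hjt⟩), hm]
            omega
          rw [hk', hU'] at ihd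
          rw [hm]
          set ρ := F (S (t+1)) - F (S t) with hρdef
          set D := F (S t ∪ Ωopt) - F (S t) with hDdef
          have hD'eq : F (S t ∪ Ωopt) - F (S (t+1)) = D - ρ := by
            rw [hDdef, hρdef]; ring
          rw [hD'eq] at ihd
          set N' := Nf α γ d m with hN'def
          set Nn := Nf α γ (d+1) (m+1) with hNndef
          have hN'0 : 0 ≤ N' := Nf_nonneg hγ0 hγ1 hα0 hα1 d m
          have hN'1 : N' ≤ 1 := Nf_le_one hγ0 hγ1 hα0 hα1 d m
          set b := min 1 ((1/α) * (1 - N')) with hbdef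
          have hb1 : b ≤ 1 := min_le_left _ _
          have hbβ : b ≤ (1/α) * (1 - N') := min_le_right _ _
          have hb0 : 0 ≤ b :=
            le_min zero_le_one (mul_nonneg (one_div_nonneg.mpr hα0.le) (by linarith))
          have hDρ0 : 0 ≤ D - ρ := by
            rw [hU'] at hD'0; rw [← hD'eq]; exact hD'0
          have h1 : b * (D - ρ) ≤ F (S K) - F (S (t+1)) :=
            le_trans (mul_le_mul_of_nonneg_right hbβ hDρ0) ihd
          set g := γ / ((m:ℝ)+1) with hgdef
          have hg0 : (0:ℝ) < g := by rw [hgdef]; positivity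
          have hg1 : g ≤ 1 := by
            rw [hgdef, div_le_one hm10]
            have hmn : (0:ℝ) ≤ (m:ℝ) := Nat.cast_nonneg m
            linarith
          have hnum := Nf_over hγ0 hγ1 hα0 hα1 d m
          rw [← hN'def, ← hNndef, ← hgdef] at hnum
          set M := max N' (1 - α) with hMdef
          have heq : α * (1 - b) = M - (1-α) := by
            rcases le_total N' (1-α) with h | h
            · have hb' : (1:ℝ) ≤ (1/α)*(1-N') := by
                have h2 : α ≤ 1 - N' := by linarith
                calc (1:ℝ) = (1/α)*α := by field_simp
                  _ ≤ (1/α)*(1-N') :=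
                    mul_le_mul_of_nonneg_left h2 (one_div_nonneg.mpr hα0.le)
              rw [hbdef, min_eq_left hb', hMdef, max_eq_right h]
              ring
            · have hb' : (1/α)*(1-N') ≤ 1 := by
                rw [div_mul_eq_mul_div, div_le_one hα0]
                linarith
              rw [hbdef, min_eq_right hb', hMdef, max_eq_left h]
              field_simp
              ring
          have hkey : (1/α) * (1 - Nn) ≤ b + (1-b) * g := by
            have e3 : α*(b + (1-b)*g) = α - (1-g)*(M-(1-α)) := by
              have e4 : α*(b+(1-b)*g) = α - α*(1-b) + (α*(1-b))*g := by ring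
              rw [e4, heq]; ring
            have h4 : 1 - Nn ≤ α*(b + (1-b)*g) := by
              rw [e3]; nlinarith [hnum]
            have h5 := mul_le_mul_of_nonneg_left h4 (one_div_nonneg.mpr hα0.le)
            have e5 : (1/α)*(α*(b + (1-b)*g)) = b + (1-b)*g := by field_simp
            rw [e5] at h5
            exact h5
          calc (1/α)*(1-Nn)*D ≤ (b + (1-b)*g)*D := mul_le_mul_of_nonneg_right hkey hD0
            _ = b*D + (1-b)*(g*D) := by ring
            _ ≤ b*D + (1-b)*ρ := by
                have h6 := mul_le_mul_of_nonneg_left hρD (by linarith : (0:ℝ) ≤ 1-b)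
                linarith
            _ = b*(D-ρ) + ρ := by ring
            _ ≤ (F (S K) - F (S (t+1))) + ρ := by linarith
            _ = F (S K) - F (S t) := by rw [hρdef]; ring
        · -- non-overlap case
          have hsd : Ωopt \ S (t+1) = Ωopt \ S t := by
            rw [hstep]; ext x
            simp only [Finset.mem_sdiff, Finset.mem_insert]
            constructor
            · rintro ⟨h1, h2⟩; exact ⟨h1, fun hx => h2 (Or.inr hx)⟩
            · rintro ⟨h1, h2⟩
              refine ⟨h1, ?_⟩
              rintro (rfl | hx)
              · exact hov h1
              · exact h2 hx
          have hcur : F (S (t+1) ∪ Ωopt) - F (S t ∪ Ωopt)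
              ≥ (1-α) * (F (S (t+1)) - F (S t)) := by
            have h := hcurv Ωopt (S (t+1)) (j t)
              (by rw [hstep]; exact Finset.mem_insert_self _ _) hov
            have he : (S (t+1)).erase (j t) = S t := by
              rw [hstep]; exact Finset.erase_insert hjt
            rw [he, ← Finset.insert_union, ← hstep] at h
            exact h
          rw [hsd, hm] at ihd
          rw [hm]
          set ρ := F (S (t+1)) - F (S t) with hρdef
          set D := F (S t ∪ Ωopt) - F (S t) with hDdef
          set D' := F (S (t+1) ∪ Ωopt) - F (S (t+1)) with hD'def
          have hD'2 : D - α * ρ ≤ D' := by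
            rw [hDdef, hD'def, hρdef]
            rw [hρdef] at hcur
            linarith [hcur]
          set N' := Nf α γ d (m+1) with hN'def
          set Nn := Nf α γ (d+1) (m+1) with hNndef
          have hN'0 : 0 ≤ N' := Nf_nonneg hγ0 hγ1 hα0 hα1 d (m+1)
          have hN'1 : N' ≤ 1 := Nf_le_one hγ0 hγ1 hα0 hα1 d (m+1)
          have hβ0 : 0 ≤ (1/α)*(1-N') := mul_nonneg (one_div_nonneg.mpr hα0.le) (by linarith)
          have h1 : (1/α)*(1-N')*(D - α*ρ) ≤ F (S K) - F (S (t+1)) :=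
            le_trans (mul_le_mul_of_nonneg_left hD'2 hβ0) ihd
          set g := γ / ((m:ℝ)+1) with hgdef
          have hnum := Nf_nonover hγ0 hγ1 hα0 hα1 d (m+1)
          rw [← hN'def, ← hNndef] at hnum
          have hcast : ((m+1 : ℕ):ℝ) = (m:ℝ)+1 := by push_cast; ring
          rw [hcast] at hnum
          have hkey : (1/α) * (1 - Nn) ≤ (1/α)*(1-N') + N' * g := by
            have h4 : 1 - Nn ≤ (1-N') + α*(N'*g) := by
              have : α * γ / ((m:ℝ)+1) = α * g := by rw [hgdef]; ring
              rw [this] at hnum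
              nlinarith [hnum]
            have h5 := mul_le_mul_of_nonneg_left h4 (one_div_nonneg.mpr hα0.le)
            have e5 : (1/α)*((1-N') + α*(N'*g)) = (1/α)*(1-N') + N'*g := by field_simp
            rw [e5] at h5
            exact h5
          have hid : (1/α)*(1-N')*α = 1-N' := by field_simp
          calc (1/α)*(1-Nn)*D ≤ ((1/α)*(1-N') + N'*g)*D :=
                mul_le_mul_of_nonneg_right hkey hD0
            _ = (1/α)*(1-N')*D + N'*(g*D) := by ring
            _ ≤ (1/α)*(1-N')*D + N'*ρ :=
                add_le_add (le_refl _) (mul_le_mul_of_nonneg_left hρD hN'0)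
            _ = (1/α)*(1-N')*(D-α*ρ) + ((1/α)*(1-N')*α)*ρ + N'*ρ := by ring
            _ = (1/α)*(1-N')*(D-α*ρ) + (1-N')*ρ + N'*ρ := by rw [hid]
            _ = (1/α)*(1-N')*(D-α*ρ) + ρ := by ring
            _ ≤ (F (S K) - F (S (t+1))) + ρ := by linarith
            _ = F (S K) - F (S t) := by rw [hρdef]; ring
  -- assemble
  have hmainK := main K le_rfl
  rw [Nat.sub_self, hS0, Finset.empty_union, Finset.sdiff_empty, hF0, sub_zero, sub_zero] at hmainK
  have hlam : ((K:ℝ) - α*γ)/(K:ℝ) = 1 - α*γ/(K:ℝ) := by field_simp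
  have hq0K : (0:ℝ) ≤ 1 - α*γ/(K:ℝ) := q_nonneg hγ0 hγ1 hα0 hα1 hK
  constructor
  · rw [ge_iff_le, hlam]
    by_cases hΩ0 : Ωopt.card = 0
    · have hempty : Ωopt = ∅ := Finset.card_eq_zero.mp hΩ0
      rw [hempty, hF0, mul_zero]
      exact hFnonneg _
    · have hk1 : 1 ≤ Ωopt.card := Nat.one_le_iff_ne_zero.mpr hΩ0
      have hNle : Nf α γ K Ωopt.card ≤ (1 - α*γ/(K:ℝ))^K := by
        unfold Nf
        rw [if_neg hΩ0]
        apply max_le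
        · apply pow_le_pow_left₀ (q_nonneg hγ0 hγ1 hα0 hα1 hk1)
          have hc0 : (0:ℝ) < (Ωopt.card:ℝ) := by exact_mod_cast hk1
          have hcK : (Ωopt.card:ℝ) ≤ (K:ℝ) := by exact_mod_cast hΩ
          have := div_le_div_of_nonneg_left
            (by positivity : (0:ℝ) ≤ α*γ) hc0 hcK
          linarith
        · have hdd : α*γ/(K:ℝ) ≤ α*γ := div_le_self (by positivity) (by exact_mod_cast hK)
          have hb := one_add_mul_le_pow
            (by linarith : (-2:ℝ) ≤ -(α*γ/(K:ℝ))) K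
          have e1 : 1 + (K:ℝ) * -(α*γ/(K:ℝ)) = 1 - α*γ := by field_simp; ring
          have e2 : (1 + -(α*γ/(K:ℝ))) = 1 - α*γ/(K:ℝ) := by ring
          rw [e1, e2] at hb
          nlinarith [mul_pos hα0 hγ0]
      have h5 : 1 - (1 - α*γ/(K:ℝ))^K ≤ 1 - Nf α γ K Ωopt.card := by linarith
      have h6 := mul_le_mul_of_nonneg_right
        (mul_le_mul_of_nonneg_left h5 (one_div_nonneg.mpr hα0.le)) (hFnonneg Ωopt)
      calc (1/α) * (1 - (1 - α*γ/(K:ℝ))^K) * F Ωopt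
          ≤ (1/α) * (1 - Nf α γ K Ωopt.card) * F Ωopt := h6
        _ ≤ F (S K) := hmainK
  · rw [ge_iff_le, hlam]
    have hexp : (1 - α*γ/(K:ℝ))^K ≤ Real.exp (-(α*γ)) := by
      have h1 : 1 - α*γ/(K:ℝ) ≤ Real.exp (-(α*γ/(K:ℝ))) := by
        have := Real.add_one_le_exp (-(α*γ/(K:ℝ)))
        linarith
      have h2 : (1 - α*γ/(K:ℝ))^K ≤ (Real.exp (-(α*γ/(K:ℝ))))^K :=
        pow_le_pow_left₀ hq0K h1 K
      rw [← Real.exp_nat_mul] at h2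
      have e : (K:ℝ) * -(α*γ/(K:ℝ)) = -(α*γ) := by field_simp
      rwa [e] at h2
    have h7 : 1 - Real.exp (-(α*γ)) ≤ 1 - (1 - α*γ/(K:ℝ))^K := by linarith
    have h8 := mul_le_mul_of_nonneg_right
      (mul_le_mul_of_nonneg_left h7 (one_div_nonneg.mpr hα0.le)) (hFnonneg Ωopt)
    exact h8
end

section
/- Let V be a finite ground set, F a nonnegative, normalized, nondecreasing set function on V with submodularity ratio at least γ ∈ (0,1] and generalized curvature at most α ∈ [0,1]. Let ∅ = S⁰ ⊂ S¹ ⊂ ⋯ ⊂ S^K be a greedy sequence of length K for F and write ρ_i := F(S^i) − F(S^{i−1}). Then for every Ω ⊆ V with |Ω| = K and every t ∈ {0, 1, …, K−1}, writing w^t := |S^t ∩ Ω|, one has α·Σ_{i ≤ t, j_i ∈ S^t \ Ω} ρ_i + Σ_{i ≤ t, j_i ∈ S^t ∩ Ω} ρ_i + (1/γ)·(K − w^t)·ρ_{t+1} ≥ F(Ω). -/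
open Finset

/-- **Lemma 1 of Bian et al.** For a nonnegative, normalized, nondecreasing set
function with submodularity ratio at least `γ ∈ (0,1]` and generalized curvature
at most `α ∈ [0,1]`, a greedy sequence `S⁰ ⊂ ⋯ ⊂ S^K` with marginal gains
`ρ_i = F(Sⁱ) − F(S^{i−1})` satisfies, for all `Ω` with `|Ω| = K` and `t < K`,
`α·Σ_{i≤t, j_i ∈ S^t\Ω} ρ_i + Σ_{i≤t, j_i ∈ S^t∩Ω} ρ_i + (1/γ)(K − w^t) ρ_{t+1} ≥ F(Ω)`. -/
theorem greedy_lp_constraint_lemma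
    {V : Type*} [DecidableEq V] [Fintype V]
    (F : Finset V → ℝ) (γ α : ℝ)
    (hγ0 : 0 < γ) (hγ1 : γ ≤ 1) (hα0 : 0 ≤ α) (hα1 : α ≤ 1)
    (hF0 : F ∅ = 0)
    (hFnonneg : ∀ S : Finset V, 0 ≤ F S)
    (hFmono : ∀ A B : Finset V, A ⊆ B → F A ≤ F B)
    (hratio : ∀ Ω S : Finset V,
      ∑ ω ∈ Ω \ S, (F (insert ω S) - F S) ≥ γ * (F (S ∪ Ω) - F S))
    (hcurv : ∀ Ω S : Finset V, ∀ i ∈ S, i ∉ Ω →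
      F (insert i ((S.erase i) ∪ Ω)) - F ((S.erase i) ∪ Ω) ≥
        (1 - α) * (F S - F (S.erase i)))
    (K : ℕ)
    (S : ℕ → Finset V) (j : ℕ → V)
    (hS0 : S 0 = ∅)
    (hSstep : ∀ t < K, S (t + 1) = insert (j t) (S t))
    (hjnew : ∀ t < K, j t ∉ S t)
    (hgreedy : ∀ t < K, ∀ v ∉ S t,
      F (insert (j t) (S t)) - F (S t) ≥ F (insert v (S t)) - F (S t))
    (Ωset : Finset V) (hΩ : Ωset.card = K)
    (t : ℕ) (ht : t < K) :
    α * ∑ i ∈ (Finset.range t).filter (fun i => j i ∈ S t \ Ωset),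
        (F (S (i + 1)) - F (S i)) +
      ∑ i ∈ (Finset.range t).filter (fun i => j i ∈ S t ∩ Ωset),
        (F (S (i + 1)) - F (S i)) +
      (1 / γ) * ((K : ℝ) - ((S t ∩ Ωset).card : ℝ)) * (F (S (t + 1)) - F (S t)) ≥
    F Ωset := by
  -- monotonicity of the chain
  have hmonoS : ∀ b ≤ K, ∀ a ≤ b, S a ⊆ S b := by
    intro b hb
    induction b with
    | zero => intro a ha; simp [Nat.le_zero.mp ha]
    | succ n ih =>
      intro a ha
      have hnK : n < K := Nat.lt_of_succ_le hb
      rcases Nat.le_succ_iff.mp ha with h | h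
      · exact (ih hnK.le a h).trans (by rw [hSstep n hnK]; exact Finset.subset_insert _ _)
      · subst h; rfl
  have hjmem : ∀ i < t, j i ∈ S t := by
    intro i hi
    have h1 : j i ∈ S (i + 1) := by
      rw [hSstep i (hi.trans ht)]; exact Finset.mem_insert_self _ _
    exact hmonoS t ht.le (i + 1) (Nat.succ_le_of_lt hi) h1
  set ρ : ℕ → ℝ := fun i => F (S (i + 1)) - F (S i) with hρ
  -- the two filters
  have hfiltA : (Finset.range t).filter (fun i => j i ∈ S t \ Ωset)
      = (Finset.range t).filter (fun i => j i ∉ Ωset) := by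
    apply Finset.filter_congr
    intro i hi
    simp only [Finset.mem_sdiff, Finset.mem_range] at *
    simp [hjmem i hi]
  have hfiltB : (Finset.range t).filter (fun i => j i ∈ S t ∩ Ωset)
      = (Finset.range t).filter (fun i => j i ∈ Ωset) := by
    apply Finset.filter_congr
    intro i hi
    simp only [Finset.mem_inter, Finset.mem_range] at *
    simp [hjmem i hi]
  -- telescoping: F (S t) = sum of ρ
  have htel : ∑ i ∈ Finset.range t, ρ i = F (S t) := by
    rw [Finset.sum_range_sub (fun i => F (S i)), hS0, hF0, sub_zero]
  -- split the sum
  have hsplit : ∑ i ∈ (Finset.range t).filter (fun i => j i ∉ Ωset), ρ i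
      + ∑ i ∈ (Finset.range t).filter (fun i => j i ∈ Ωset), ρ i = F (S t) := by
    rw [Finset.sum_filter_not_add_sum_filter, htel]
  -- curvature bound: F(Ω ∪ S t) - F(Ω) ≥ (1-α) * Σ_A ρ
  have hcurvsum : F (Ωset ∪ S t) - F Ωset
      ≥ (1 - α) * ∑ i ∈ (Finset.range t).filter (fun i => j i ∉ Ωset), ρ i := by
    have htel2 : ∑ i ∈ Finset.range t, (F (Ωset ∪ S (i + 1)) - F (Ωset ∪ S i))
        = F (Ωset ∪ S t) - F Ωset := by
      rw [Finset.sum_range_sub (fun i => F (Ωset ∪ S i)), hS0, Finset.union_empty]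
    rw [Finset.mul_sum, Finset.sum_filter, ← htel2]
    apply Finset.sum_le_sum
    intro i hi
    have hiT : i < t := Finset.mem_range.mp hi
    have hiK : i < K := hiT.trans ht
    by_cases hj : j i ∈ Ωset
    · simp only [hj, if_neg (not_not_intro hj)]
      have : Ωset ∪ S (i + 1) = Ωset ∪ S i := by
        rw [hSstep i hiK, Finset.union_insert, Finset.insert_eq_self.mpr (Finset.mem_union_left _ hj)]
      rw [this]; simp
    · simp only [hj, if_pos hj]
      have hmem : j i ∈ S (i + 1) := by
        rw [hSstep i hiK]; exact Finset.mem_insert_self _ _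
      have herase : (S (i + 1)).erase (j i) = S i := by
        rw [hSstep i hiK, Finset.erase_insert (hjnew i hiK)]
      have h := hcurv Ωset (S (i + 1)) (j i) hmem hj
      rw [herase] at h
      have h1 : insert (j i) (S i ∪ Ωset) = Ωset ∪ S (i + 1) := by
        rw [hSstep i hiK, Finset.union_insert, Finset.union_comm]
      have h2 : S i ∪ Ωset = Ωset ∪ S i := Finset.union_comm _ _
      rw [h1, h2] at h
      simpa [hρ] using h
  -- submodularity-ratio bound
  have hcard : ((Ωset \ S t).card : ℝ) = (K : ℝ) - ((S t ∩ Ωset).card : ℝ) := by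
    have h1 : (Ωset \ S t).card + (Ωset ∩ S t).card = Ωset.card :=
      Finset.card_sdiff_add_card_inter _ _
    rw [Finset.inter_comm, hΩ] at h1
    have h2 : ((Ωset \ S t).card : ℝ) + ((S t ∩ Ωset).card : ℝ) = (K : ℝ) := by
      exact_mod_cast congrArg (Nat.cast : ℕ → ℝ) h1
    linarith
  have hratio' : γ * (F (S t ∪ Ωset) - F (S t))
      ≤ ((K : ℝ) - ((S t ∩ Ωset).card : ℝ)) * ρ t := by
    have h := hratio Ωset (S t)
    have hb : ∑ ω ∈ Ωset \ S t, (F (insert ω (S t)) - F (S t))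
        ≤ ((Ωset \ S t).card : ℝ) * ρ t := by
      calc ∑ ω ∈ Ωset \ S t, (F (insert ω (S t)) - F (S t))
          ≤ ∑ _ω ∈ Ωset \ S t, ρ t := by
            apply Finset.sum_le_sum
            intro ω hω
            have hωn : ω ∉ S t := (Finset.mem_sdiff.mp hω).2
            have := hgreedy t ht ω hωn
            simp only [hρ]
            rw [hSstep t ht]
            exact this
        _ = ((Ωset \ S t).card : ℝ) * ρ t := by rw [Finset.sum_const, nsmul_eq_mul]
    rw [hcard] at hb
    linarith
  have hratio2 : F (Ωset ∪ S t) - F (S t)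
      ≤ (1 / γ) * ((K : ℝ) - ((S t ∩ Ωset).card : ℝ)) * ρ t := by
    rw [Finset.union_comm]
    rw [div_mul_eq_mul_div, div_mul_eq_mul_div, one_mul, le_div_iff₀ hγ0, mul_comm]
    exact hratio'
  -- combine
  rw [hfiltA, hfiltB]
  set a := ∑ i ∈ (Finset.range t).filter (fun i => j i ∉ Ωset), ρ i with ha
  set b := ∑ i ∈ (Finset.range t).filter (fun i => j i ∈ Ωset), ρ i with hb
  have : F Ωset ≤ F (Ωset ∪ S t) - (1 - α) * a := by linarith
  calc F Ωset ≤ F (Ωset ∪ S t) - (1 - α) * a := this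
    _ ≤ F (S t) + (1 / γ) * ((K : ℝ) - ((S t ∩ Ωset).card : ℝ)) * ρ t - (1 - α) * a := by
        linarith
    _ = α * a + b + (1 / γ) * ((K : ℝ) - ((S t ∩ Ωset).card : ℝ)) * ρ t := by
        rw [← hsplit]; ring
end

section
/- Let K ≥ 1 be an integer and α, γ ∈ (0,1]. Let x_1, …, x_K be nonnegative real numbers such that for every t ∈ {0, 1, …, K−1} the constraint α·(x_1 + ⋯ + x_t) + (K/γ)·x_{t+1} ≥ 1 holds. Then x_1 + ⋯ + x_K ≥ (1/α)·[1 − ((K − αγ)/K)^K]. Moreover, the vector given by x_i = (γ/K)·((K − γα)/K)^{i−1} for i = 1, …, K satisfies all of these constraints with equality and attains this value, so (1/α)·[1 − ((K − αγ)/K)^K] is the optimal value of the corresponding linear program. -/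
open Finset

/-- **The worst-case greedy LP and its optimal value.** For `K ≥ 1` and
`α, γ ∈ (0,1]`: any nonnegative `x` satisfying
`α(x_1 + ⋯ + x_t) + (K/γ)·x_{t+1} ≥ 1` for all `t ∈ {0,…,K−1}` (here 0-indexed)
has `x_1 + ⋯ + x_K ≥ (1/α)(1 − ((K−αγ)/K)^K)`; moreover the explicit vector
`x_i = (γ/K)((K−γα)/K)^{i−1}` is nonnegative, satisfies every constraint with
equality, and attains this value, so it is the optimal value of the LP. -/
theorem greedy_lp_optimal_value (K : ℕ) (hK : 1 ≤ K) (α γ : ℝ)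
    (hα0 : 0 < α) (hα1 : α ≤ 1) (hγ0 : 0 < γ) (hγ1 : γ ≤ 1) :
    (∀ x : ℕ → ℝ, (∀ i < K, 0 ≤ x i) →
      (∀ t < K, α * ∑ i ∈ Finset.range t, x i + ((K : ℝ) / γ) * x t ≥ 1) →
      ∑ i ∈ Finset.range K, x i ≥
        (1 / α) * (1 - (((K : ℝ) - α * γ) / K) ^ K)) ∧
    (∀ i < K, 0 ≤ (γ / (K : ℝ)) * (((K : ℝ) - γ * α) / K) ^ i) ∧
    (∀ t < K,
      α * ∑ i ∈ Finset.range t, (γ / (K : ℝ)) * (((K : ℝ) - γ * α) / K) ^ i +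
        ((K : ℝ) / γ) * ((γ / (K : ℝ)) * (((K : ℝ) - γ * α) / K) ^ t) = 1) ∧
    (∑ i ∈ Finset.range K, (γ / (K : ℝ)) * (((K : ℝ) - γ * α) / K) ^ i =
      (1 / α) * (1 - (((K : ℝ) - α * γ) / K) ^ K)) := by
  have hK1 : (1:ℝ) ≤ K := by exact_mod_cast hK
  have hKpos : (0:ℝ) < K := by linarith
  have hαγ : α * γ ≤ 1 := by nlinarith
  rw [show ((K:ℝ) - γ * α) = ((K:ℝ) - α * γ) by ring]
  set r : ℝ := ((K:ℝ) - α * γ) / K with hrdef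
  have hr0 : 0 ≤ r := div_nonneg (by nlinarith) hKpos.le
  have hre : r = 1 - α * γ / K := by rw [hrdef]; field_simp
  have hsum : ∀ n : ℕ, ∑ i ∈ Finset.range n, (γ / (K:ℝ)) * r ^ i
      = (1/α) * (1 - r ^ n) := by
    intro n
    induction n with
    | zero => simp
    | succ n ih =>
      rw [Finset.sum_range_succ, ih, pow_succ, hre]
      field_simp
      ring
  refine ⟨?_, ?_, ?_, hsum K⟩
  · intro x hx hc
    have main : ∀ t ≤ K, ∑ i ∈ Finset.range t, x i ≥ (1/α) * (1 - r ^ t) := by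
      intro t
      induction t with
      | zero => intro _; simp
      | succ t ih =>
        intro ht
        have htK : t < K := ht
        have hS := ih htK.le
        have hct := hc t htK
        rw [Finset.sum_range_succ, pow_succ]
        set S := ∑ i ∈ Finset.range t, x i with hSdef
        have h1 : x t ≥ γ / K * (1 - α * S) := by
          have h1' : 1 - α * S ≤ (K:ℝ)/γ * x t := by linarith
          calc γ/(K:ℝ) * (1 - α*S) ≤ γ/K * ((K:ℝ)/γ * x t) :=
                mul_le_mul_of_nonneg_left h1' (by positivity)
            _ = x t := by field_simp
        have h2 : S + x t ≥ r * S + γ / K := by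
          have hexp : γ/(K:ℝ) * (1 - α*S) = γ/K - (α*γ/K) * S := by ring
          have hrS : r * S = S - (α*γ/K) * S := by rw [hre]; ring
          linarith
        have h3 : r * ((1/α) * (1 - r^t)) ≤ r * S :=
          mul_le_mul_of_nonneg_left hS hr0
        have h4 : r * ((1/α) * (1 - r^t)) + γ/K = (1/α) * (1 - r^t * r) := by
          rw [hre]; field_simp; ring
        linarith
    exact main K le_rfl
  · intro i _
    exact mul_nonneg (by positivity) (pow_nonneg hr0 i)
  · intro t _
    rw [hsum t]
    field_simp
    ring
end

section
/- For all integers n ≥ m ≥ 1 and every γ ∈ (0,1], one has Σ_{k=1}^{m} (γ/n)·Π_{i=1}^{k−1} ((n − i + 1 − γ)/(n − i)) ≤ 1 (the product over the empty index range being 1). Consequently, in the greedy LP perturbation argument, decreasing one coordinate by ε > 0 and increasing the subsequent coordinates by the recursively defined amounts ε_{q+1} = ε·γ/(K−r) and ε_{q+1+u} = ε_{q+u}·(K − r − u + 1 − γ)/(K − r − u) never increases the LP objective. -/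
open Finset

private lemma prodNonneg (n : ℕ) (γ : ℝ) (hγ1 : γ ≤ 1) (m : ℕ) (hmn : m ≤ n) :
    0 ≤ ∏ i ∈ Finset.Icc 1 m, (((n : ℝ) - (i : ℝ) + 1 - γ) / ((n : ℝ) - (i : ℝ))) := by
  apply Finset.prod_nonneg
  intro i hi
  simp only [Finset.mem_Icc] at hi
  have h1 : (i : ℝ) ≤ n := by exact_mod_cast le_trans hi.2 hmn
  apply div_nonneg <;> linarith

private lemma sumBound (n : ℕ) (hn : 1 ≤ n) (γ : ℝ) (hγ0 : 0 < γ) (hγ1 : γ ≤ 1) :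
    ∀ m, m ≤ n →
      ∑ k ∈ Finset.Icc 1 m, (γ / (n : ℝ)) *
          ∏ i ∈ Finset.Icc 1 (k - 1), (((n : ℝ) - (i : ℝ) + 1 - γ) / ((n : ℝ) - (i : ℝ)))
        ≤ 1 - (((n : ℝ) - (m : ℝ)) / n) *
          ∏ i ∈ Finset.Icc 1 m, (((n : ℝ) - (i : ℝ) + 1 - γ) / ((n : ℝ) - (i : ℝ))) := by
  have hn0 : (0:ℝ) < n := by exact_mod_cast hn
  intro m
  induction m with
  | zero =>
    intro _
    simp only [Nat.cast_zero, sub_zero, Finset.Icc_eq_empty_of_lt (by norm_num : (1:ℕ) > 0)]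
    rw [Finset.sum_empty, Finset.prod_empty, div_self (ne_of_gt hn0)]
    norm_num
  | succ m ih =>
    intro h
    have hm : m ≤ n := Nat.le_of_succ_le h
    have IH := ih hm
    set a := ∏ i ∈ Finset.Icc 1 m, (((n : ℝ) - (i : ℝ) + 1 - γ) / ((n : ℝ) - (i : ℝ))) with ha
    have hanon : 0 ≤ a := prodNonneg n γ hγ1 m hm
    rw [Finset.sum_Icc_succ_top (by omega : 1 ≤ m + 1),
        Finset.prod_Icc_succ_top (by omega : 1 ≤ m + 1)]
    have h1 : m + 1 - 1 = m := by omega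
    rw [h1]
    push_cast
    rcases lt_or_eq_of_le h with hlt | heq
    · have hd : ((n:ℝ) - ((m:ℝ) + 1)) ≠ 0 := by
        have : (m:ℝ) + 1 < n := by exact_mod_cast hlt
        linarith
      have key : (((n:ℝ) - ((m:ℝ) + 1)) / n) *
          (a * (((n:ℝ) - ((m:ℝ)+1) + 1 - γ) / ((n:ℝ) - ((m:ℝ)+1))))
          = a * (((n:ℝ) - m - γ) / n) := by
        field_simp
        ring
      have key2 : a * (((n:ℝ) - m - γ) / n) + (γ / n) * a = (((n:ℝ) - m) / n) * a := by
        ring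
      rw [key]
      linarith
    · have hz : (n:ℝ) - ((m:ℝ) + 1) = 0 := by
        have : ((m:ℝ) + 1) = (n:ℝ) := by exact_mod_cast congrArg (Nat.cast : ℕ → ℝ) heq
        linarith
      rw [hz]
      simp only [div_zero, mul_zero, zero_div, zero_mul, sub_zero]
      have h2 : (n:ℝ) - (m:ℝ) = 1 := by linarith
      rw [h2] at IH
      have hkey : (γ / (n:ℝ)) * a ≤ (1 / (n:ℝ)) * a := by
        apply mul_le_mul_of_nonneg_right _ hanon
        gcongr
      linarith

/-- **Partial-sum inequality and the perturbation claim (Δ_LP ≤ 0).** For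
`n ≥ m ≥ 1` and `γ ∈ (0,1]`,
`Σ_{k=1}^m (γ/n)·Π_{i=1}^{k−1} ((n−i+1−γ)/(n−i)) ≤ 1`. Consequently, in the
greedy LP perturbation argument (with `1 ≤ r ≤ q < K`, `n = K−r`, `m = K−q`),
decreasing one coordinate by `ε > 0` and increasing the subsequent coordinates by
`ε_{q+1} = ε·γ/(K−r)` and `ε_{q+1+u} = ε_{q+u}·(K−r−u+1−γ)/(K−r−u)` never
increases the LP objective: `−ε + Σ_{u=1}^{K−q} ε_{q+u} ≤ 0`. -/
theorem greedy_lp_perturbation (n m : ℕ) (hm : 1 ≤ m) (hmn : m ≤ n)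
    (γ : ℝ) (hγ0 : 0 < γ) (hγ1 : γ ≤ 1) :
    (∑ k ∈ Finset.Icc 1 m, (γ / (n : ℝ)) *
        ∏ i ∈ Finset.Icc 1 (k - 1), (((n : ℝ) - (i : ℝ) + 1 - γ) / ((n : ℝ) - (i : ℝ)))
      ≤ 1) ∧
    (∀ (K r q : ℕ) (ε : ℝ) (e : ℕ → ℝ),
      1 ≤ r → r ≤ q → q < K → 0 < ε →
      e 1 = ε * γ / ((K : ℝ) - (r : ℝ)) →
      (∀ u : ℕ, 1 ≤ u → u + 1 ≤ K - q →
        e (u + 1) = e u * (((K : ℝ) - (r : ℝ) - (u : ℝ) + 1 - γ) /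
          ((K : ℝ) - (r : ℝ) - (u : ℝ)))) →
      -ε + ∑ u ∈ Finset.Icc 1 (K - q), e u ≤ 0) := by
  have hn : 1 ≤ n := le_trans hm hmn
  have main : ∀ (N M : ℕ), 1 ≤ N → M ≤ N →
      ∑ k ∈ Finset.Icc 1 M, (γ / (N : ℝ)) *
        ∏ i ∈ Finset.Icc 1 (k - 1), (((N : ℝ) - (i : ℝ) + 1 - γ) / ((N : ℝ) - (i : ℝ))) ≤ 1 := by
    intro N M hN hMN
    have := sumBound N hN γ hγ0 hγ1 M hMN
    have h1 : 0 ≤ (((N : ℝ) - (M : ℝ)) / N) *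
        ∏ i ∈ Finset.Icc 1 M, (((N : ℝ) - (i : ℝ) + 1 - γ) / ((N : ℝ) - (i : ℝ))) := by
      apply mul_nonneg _ (prodNonneg N γ hγ1 M hMN)
      apply div_nonneg
      · have : (M:ℝ) ≤ N := by exact_mod_cast hMN
        linarith
      · positivity
    linarith
  constructor
  · exact main n m hn hmn
  · intro K r q ε e hr hrq hqK hε he1 herec
    set N := K - r with hN
    set M := K - q with hM
    have hrK : r ≤ K := le_of_lt (lt_of_le_of_lt hrq hqK)
    have hN1 : 1 ≤ N := by omega
    have hM1 : 1 ≤ M := by omega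
    have hMN : M ≤ N := by omega
    have hcast : ((N : ℕ) : ℝ) = (K : ℝ) - (r : ℝ) := by
      rw [hN, Nat.cast_sub hrK]
    have heq : ∀ u, 1 ≤ u → u ≤ M → e u = ε * ((γ / (N : ℝ)) *
        ∏ i ∈ Finset.Icc 1 (u - 1), (((N : ℝ) - (i : ℝ) + 1 - γ) / ((N : ℝ) - (i : ℝ)))) := by
      intro u hu
      induction u, hu using Nat.le_induction with
      | base =>
        intro _
        simp only [Nat.sub_self, Finset.Icc_eq_empty_of_lt (by norm_num : (1:ℕ) > 0),
          Finset.prod_empty, mul_one]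
        rw [he1, hcast]
        ring
      | succ u hu ih =>
        intro hle
        have hurec := herec u hu (by omega)
        have ihu := ih (by omega)
        obtain ⟨v, rfl⟩ : ∃ v, u = v + 1 := ⟨u - 1, by omega⟩
        have h1 : v + 1 - 1 = v := by omega
        have h2 : v + 1 + 1 - 1 = v + 1 := by omega
        rw [h2, Finset.prod_Icc_succ_top (by omega : 1 ≤ v + 1)]
        rw [hurec, ihu, h1, hcast]
        push_cast
        ring
    have hsum : ∑ u ∈ Finset.Icc 1 M, e u = ε * ∑ u ∈ Finset.Icc 1 M, (γ / (N : ℝ)) *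
        ∏ i ∈ Finset.Icc 1 (u - 1), (((N : ℝ) - (i : ℝ) + 1 - γ) / ((N : ℝ) - (i : ℝ))) := by
      rw [Finset.mul_sum]
      apply Finset.sum_congr rfl
      intro u hu
      simp only [Finset.mem_Icc] at hu
      exact heq u hu.1 hu.2
    rw [hsum]
    have := main N M hN1 hMN
    nlinarith
end

section
/- Let F be a nondecreasing submodular set function on a finite ground set V with ρ_j(∅) > 0 for all j ∈ V, and define the total curvature α^total := 1 − min_{j ∈ V} ρ_j(V\{j}) / ρ_j(∅). Then: (i) for all Ω, S ⊆ V and all i ∈ S\Ω, one has ρ_i((S\{i}) ∪ Ω) ≥ (1 − α^total)·ρ_i(S\{i}); and (ii) α^total is the smallest constant with this property, i.e., there exist Ω, S ⊆ V and i ∈ S\Ω with ρ_i((S\{i}) ∪ Ω) = (1 − α^total)·ρ_i(S\{i}) and ρ_i(S\{i}) > 0. Hence for nondecreasing submodular functions the generalized curvature equals the classical total curvature. -/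
open Finset

/-- **For nondecreasing submodular functions, generalized curvature equals the
classical total curvature.** With `α^total = 1 − min_j ρ_j(V\{j})/ρ_j(∅)`:
(i) `ρ_i((S\{i}) ∪ Ω) ≥ (1 − α^total)·ρ_i(S\{i})` for all `Ω, S` and `i ∈ S\Ω`;
(ii) `α^total` is the smallest such constant: there are `Ω, S, i` attaining
equality with `ρ_i(S\{i}) > 0`. -/
theorem generalized_curvature_eq_total_curvature
    {V : Type*} [DecidableEq V] [Fintype V] [Nonempty V]
    (F : Finset V → ℝ)
    (hFmono : ∀ A B : Finset V, A ⊆ B → F A ≤ F B)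
    (hFsub : ∀ A B : Finset V, ∀ v : V, A ⊆ B → v ∉ B →
      F (insert v A) - F A ≥ F (insert v B) - F B)
    (hpos : ∀ j : V, 0 < F {j} - F ∅)
    (αtot : ℝ)
    (hαtot : αtot = 1 - Finset.univ.inf' Finset.univ_nonempty
      (fun j : V => (F Finset.univ - F (Finset.univ.erase j)) / (F {j} - F ∅))) :
    (∀ Ω S : Finset V, ∀ i ∈ S, i ∉ Ω →
      F (insert i ((S.erase i) ∪ Ω)) - F ((S.erase i) ∪ Ω) ≥
        (1 - αtot) * (F S - F (S.erase i))) ∧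
    (∃ (Ω S : Finset V) (i : V), i ∈ S ∧ i ∉ Ω ∧
      F (insert i ((S.erase i) ∪ Ω)) - F ((S.erase i) ∪ Ω) =
        (1 - αtot) * (F S - F (S.erase i)) ∧
      0 < F S - F (S.erase i)) := by

  set m : ℝ := Finset.univ.inf' Finset.univ_nonempty
      (fun j : V => (F Finset.univ - F (Finset.univ.erase j)) / (F {j} - F ∅)) with hm
  have h1α : 1 - αtot = m := by rw [hαtot]; ring
  have hm0 : 0 ≤ m := by
    apply Finset.le_inf'
    intro j _
    exact div_nonneg (sub_nonneg.2 (hFmono _ _ (Finset.erase_subset _ _)))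
      (le_of_lt (hpos j))
  constructor
  · intro Ω S i hi hiΩ
    have hins : insert i (S.erase i) = S := Finset.insert_erase hi
    have hsub : (S.erase i) ∪ Ω ⊆ Finset.univ.erase i :=
      Finset.union_subset (Finset.erase_subset_erase _ (Finset.subset_univ _))
        (Finset.subset_erase.2 ⟨Finset.subset_univ _, hiΩ⟩)
    have hA : F (insert i ((S.erase i) ∪ Ω)) - F ((S.erase i) ∪ Ω) ≥
        F Finset.univ - F (Finset.univ.erase i) := by
      have := hFsub ((S.erase i) ∪ Ω) (Finset.univ.erase i) i hsub
        (Finset.notMem_erase i _)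
      rwa [Finset.insert_erase (Finset.mem_univ i)] at this
    have hB : F S - F (S.erase i) ≤ F {i} - F ∅ := by
      have := hFsub ∅ (S.erase i) i (Finset.empty_subset _) (Finset.notMem_erase i _)
      rw [show (insert i (∅ : Finset V)) = {i} from rfl, hins] at this
      linarith
    have hle : m ≤ (F Finset.univ - F (Finset.univ.erase i)) / (F {i} - F ∅) :=
      Finset.inf'_le _ (Finset.mem_univ i)
    have key : m * (F S - F (S.erase i)) ≤ F Finset.univ - F (Finset.univ.erase i) := by
      calc m * (F S - F (S.erase i)) ≤ m * (F {i} - F ∅) := by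
            exact mul_le_mul_of_nonneg_left hB hm0
        _ ≤ ((F Finset.univ - F (Finset.univ.erase i)) / (F {i} - F ∅)) * (F {i} - F ∅) :=
            mul_le_mul_of_nonneg_right hle (le_of_lt (hpos i))
        _ = F Finset.univ - F (Finset.univ.erase i) :=
            div_mul_cancel₀ _ (ne_of_gt (hpos i))
    rw [h1α]
    linarith
  · obtain ⟨j, -, hj⟩ := Finset.exists_mem_eq_inf' (Finset.univ_nonempty (α := V))
      (fun j : V => (F Finset.univ - F (Finset.univ.erase j)) / (F {j} - F ∅))
    refine ⟨Finset.univ.erase j, {j}, j, Finset.mem_singleton_self j,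
      Finset.notMem_erase j _, ?_, ?_⟩
    · rw [Finset.erase_singleton, Finset.empty_union,
        Finset.insert_erase (Finset.mem_univ j), h1α, hm, hj]
      rw [div_mul_cancel₀ _ (ne_of_gt (hpos j))]
    · rw [Finset.erase_singleton]
      exact hpos j
end

section
/- Let K ≥ 2, α ∈ [0,1], and γ = 1, and let F be the tightness function on the ground set V = {s_1,…,s_K} ∪ {ω_1,…,ω_K}. Then F is submodular, i.e., F(A ∪ {v}) − F(A) ≥ F(B ∪ {v}) − F(B) for all A ⊆ B ⊆ V and v ∈ V \ B. (With γ = 1 one has f(x) = x.) -/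
open Finset

/-- `ξ_i := (1/K)·((K − γα)/K)^{i}` (0-indexed, so `xi K α γ i` is the paper's `ξ_{i+1}`). -/
noncomputable def xi (K : ℕ) (α γ : ℝ) (i : Fin K) : ℝ :=
  (1 / (K : ℝ)) * (((K : ℝ) - γ * α) / (K : ℝ)) ^ (i : ℕ)

/-- `f(x) := ((γ⁻¹ − 1)/(K − 1))·x² + ((K − γ⁻¹)/(K − 1))·x`. -/
noncomputable def fconv (K : ℕ) (γ : ℝ) (x : ℝ) : ℝ :=
  ((γ⁻¹ - 1) / ((K : ℝ) - 1)) * x ^ 2 + (((K : ℝ) - γ⁻¹) / ((K : ℝ) - 1)) * x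

/-- The tightness function on the ground set `V = {s_1,…,s_K} ∪ {ω_1,…,ω_K}`,
modeled as `Fin K ⊕ Fin K` with `Sum.inl i = s_{i+1}` and `Sum.inr i = ω_{i+1}`:
`F(T) = (f(|T ∩ Ω|)/K)·(1 − αγ·Σ_{i : s_i ∈ T} ξ_i) + Σ_{i : s_i ∈ T} ξ_i`. -/
noncomputable def tightF (K : ℕ) (α γ : ℝ) (T : Finset (Fin K ⊕ Fin K)) : ℝ :=
  (fconv K γ (((Finset.univ.filter (fun i : Fin K => Sum.inr i ∈ T)).card : ℝ)) / (K : ℝ)) *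
      (1 - α * γ * ∑ i ∈ Finset.univ.filter (fun i : Fin K => Sum.inl i ∈ T), xi K α γ i) +
    ∑ i ∈ Finset.univ.filter (fun i : Fin K => Sum.inl i ∈ T), xi K α γ i

lemma filterl_insert_inr (K : ℕ) (j : Fin K) (T : Finset (Fin K ⊕ Fin K)) :
    Finset.univ.filter (fun i : Fin K => Sum.inl i ∈ insert (Sum.inr j) T) =
      Finset.univ.filter (fun i : Fin K => Sum.inl i ∈ T) := by
  ext i; simp

lemma filterr_insert_inl (K : ℕ) (j : Fin K) (T : Finset (Fin K ⊕ Fin K)) :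
    Finset.univ.filter (fun i : Fin K => Sum.inr i ∈ insert (Sum.inl j) T) =
      Finset.univ.filter (fun i : Fin K => Sum.inr i ∈ T) := by
  ext i; simp

lemma filterr_insert_inr (K : ℕ) (j : Fin K) (T : Finset (Fin K ⊕ Fin K)) :
    Finset.univ.filter (fun i : Fin K => Sum.inr i ∈ insert (Sum.inr j) T) =
      insert j (Finset.univ.filter (fun i : Fin K => Sum.inr i ∈ T)) := by
  ext i; simp [or_comm]

lemma filterl_insert_inl (K : ℕ) (j : Fin K) (T : Finset (Fin K ⊕ Fin K)) :
    Finset.univ.filter (fun i : Fin K => Sum.inl i ∈ insert (Sum.inl j) T) =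
      insert j (Finset.univ.filter (fun i : Fin K => Sum.inl i ∈ T)) := by
  ext i; simp [or_comm]

/-- **Tightness function with `γ = 1` is submodular.** -/
theorem tightF_submodular_of_gamma_one (K : ℕ) (hK : 2 ≤ K)
    (α : ℝ) (hα0 : 0 ≤ α) (hα1 : α ≤ 1) :
    ∀ A B : Finset (Fin K ⊕ Fin K), ∀ v : Fin K ⊕ Fin K, A ⊆ B → v ∉ B →
      tightF K α 1 (insert v A) - tightF K α 1 A ≥
        tightF K α 1 (insert v B) - tightF K α 1 B := by
  intro A B v hAB hvB
  have hvA : v ∉ A := fun h => hvB (hAB h)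
  have hK2 : (2:ℝ) ≤ (K:ℝ) := by exact_mod_cast hK
  have hKpos : (0:ℝ) < K := by linarith
  have hK1 : (K:ℝ) - 1 ≠ 0 := by linarith
  have hfe : ∀ x : ℝ, fconv K 1 x = x := by
    intro x
    simp only [fconv, inv_one, sub_self, zero_div, zero_mul, zero_add, div_self hK1, one_mul]
  have hxi0 : ∀ i : Fin K, 0 ≤ xi K α 1 i := by
    intro i
    unfold xi
    have h1 : (0:ℝ) ≤ (K:ℝ) - 1 * α := by linarith
    have := pow_nonneg (div_nonneg h1 hKpos.le) (i : ℕ)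
    positivity
  have hKinv : (0:ℝ) < ((K:ℝ))⁻¹ := inv_pos.2 hKpos
  set SA := ∑ i ∈ Finset.univ.filter (fun i : Fin K => Sum.inl i ∈ A), xi K α 1 i with hSA
  set SB := ∑ i ∈ Finset.univ.filter (fun i : Fin K => Sum.inl i ∈ B), xi K α 1 i with hSB
  have hS0 : 0 ≤ SA := Finset.sum_nonneg fun i _ => hxi0 i
  have hSmono : SA ≤ SB := by
    apply Finset.sum_le_sum_of_subset_of_nonneg
    · intro i hi
      simp only [Finset.mem_filter, Finset.mem_univ, true_and] at hi ⊢
      exact hAB hi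
    · intro i _ _; exact hxi0 i
  have hmmono : ((Finset.univ.filter (fun i : Fin K => Sum.inr i ∈ A)).card : ℝ) ≤
      ((Finset.univ.filter (fun i : Fin K => Sum.inr i ∈ B)).card : ℝ) := by
    have : (Finset.univ.filter (fun i : Fin K => Sum.inr i ∈ A)) ⊆
        (Finset.univ.filter (fun i : Fin K => Sum.inr i ∈ B)) := by
      intro i hi
      simp only [Finset.mem_filter, Finset.mem_univ, true_and] at hi ⊢
      exact hAB hi
    exact_mod_cast Finset.card_le_card this
  cases v with
  | inl j =>
    have hjA : j ∉ Finset.univ.filter (fun i : Fin K => Sum.inl i ∈ A) := by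
      simp only [Finset.mem_filter, Finset.mem_univ, true_and]; exact hvA
    have hjB : j ∉ Finset.univ.filter (fun i : Fin K => Sum.inl i ∈ B) := by
      simp only [Finset.mem_filter, Finset.mem_univ, true_and]; exact hvB
    simp only [tightF, hfe, filterr_insert_inl, filterl_insert_inl,
      Finset.sum_insert hjA, Finset.sum_insert hjB, ← hSA, ← hSB, one_mul]
    have hξ : 0 ≤ xi K α 1 j := hxi0 j
    have hprod : 0 ≤ α * xi K α 1 j *
        (((Finset.univ.filter (fun i : Fin K => Sum.inr i ∈ B)).card : ℝ) -
          ((Finset.univ.filter (fun i : Fin K => Sum.inr i ∈ A)).card : ℝ)) * ((K:ℝ))⁻¹ :=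
      mul_nonneg (mul_nonneg (mul_nonneg hα0 hξ) (by linarith)) hKinv.le
    simp only [div_eq_mul_inv]
    nlinarith [hprod]
  | inr j =>
    have hjA : j ∉ Finset.univ.filter (fun i : Fin K => Sum.inr i ∈ A) := by
      simp only [Finset.mem_filter, Finset.mem_univ, true_and]; exact hvA
    have hjB : j ∉ Finset.univ.filter (fun i : Fin K => Sum.inr i ∈ B) := by
      simp only [Finset.mem_filter, Finset.mem_univ, true_and]; exact hvB
    simp only [tightF, hfe, filterl_insert_inr, filterr_insert_inr,
      Finset.card_insert_of_notMem hjA, Finset.card_insert_of_notMem hjB,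
      ← hSA, ← hSB, one_mul, Nat.cast_add, Nat.cast_one]
    have hprod : 0 ≤ α * (SB - SA) * ((K:ℝ))⁻¹ :=
      mul_nonneg (mul_nonneg hα0 (by linarith)) hKinv.le
    simp only [div_eq_mul_inv]
    nlinarith [hprod]
end

section
/- Let K ≥ 2, α ∈ [0,1], γ ∈ (0,1], and let F be the tightness function on the ground set V = {s_1,…,s_K} ∪ {ω_1,…,ω_K}. Then F has submodularity ratio exactly γ: (i) Σ_{ω ∈ Ω\S} (F(S ∪ {ω}) − F(S)) ≥ γ·(F(S ∪ Ω) − F(S)) for all Ω, S ⊆ V; and (ii) taking S = ∅ and Ω = {ω_1,…,ω_K} one has Σ_{ω ∈ Ω} F({ω}) = 1 = γ·F(Ω) with F(Ω) = 1/γ > 0, so the bound γ is attained. -/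
open Finset

noncomputable def Xs (K : ℕ) (α γ : ℝ) (T : Finset (Fin K ⊕ Fin K)) : ℝ :=
  ∑ i ∈ Finset.univ.filter (fun i : Fin K => Sum.inl i ∈ T), xi K α γ i

def Ws (K : ℕ) (T : Finset (Fin K ⊕ Fin K)) : ℕ :=
  (Finset.univ.filter (fun i : Fin K => Sum.inr i ∈ T)).card

lemma tightF_eq (K : ℕ) (α γ : ℝ) (T : Finset (Fin K ⊕ Fin K)) :
    tightF K α γ T = fconv K γ ((Ws K T : ℝ)) / K * (1 - α * γ * Xs K α γ T) + Xs K α γ T := rfl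

lemma Ws_insert_inr (K : ℕ) (j : Fin K) (T : Finset (Fin K ⊕ Fin K)) (h : Sum.inr j ∉ T) :
    Ws K (insert (Sum.inr j) T) = Ws K T + 1 := by
  unfold Ws
  have : (Finset.univ.filter (fun i : Fin K => Sum.inr i ∈ insert (Sum.inr j) T))
      = insert j (Finset.univ.filter (fun i : Fin K => Sum.inr i ∈ T)) := by
    ext i; simp [Finset.mem_insert, or_comm]
  rw [this, Finset.card_insert_of_notMem (by simp [h])]

lemma Ws_insert_inl (K : ℕ) (i : Fin K) (T : Finset (Fin K ⊕ Fin K)) :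
    Ws K (insert (Sum.inl i) T) = Ws K T := by
  unfold Ws; congr 1; ext j; simp

lemma Xs_insert_inr (K : ℕ) (α γ : ℝ) (j : Fin K) (T : Finset (Fin K ⊕ Fin K)) :
    Xs K α γ (insert (Sum.inr j) T) = Xs K α γ T := by
  unfold Xs; congr 1; ext i; simp

lemma Xs_insert_inl (K : ℕ) (α γ : ℝ) (i : Fin K) (T : Finset (Fin K ⊕ Fin K))
    (h : Sum.inl i ∉ T) :
    Xs K α γ (insert (Sum.inl i) T) = xi K α γ i + Xs K α γ T := by
  unfold Xs
  have : (Finset.univ.filter (fun j : Fin K => Sum.inl j ∈ insert (Sum.inl i) T))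
      = insert i (Finset.univ.filter (fun j : Fin K => Sum.inl j ∈ T)) := by
    ext j; simp [Finset.mem_insert, or_comm]
  rw [this, Finset.sum_insert (by simp [h])]

lemma Ws_union (K : ℕ) (S Ω : Finset (Fin K ⊕ Fin K)) :
    Ws K (S ∪ Ω) = Ws K S + (Finset.univ.filter (fun i : Fin K => Sum.inr i ∈ Ω \ S)).card := by
  unfold Ws
  rw [← Finset.card_union_of_disjoint (by
    simp only [Finset.disjoint_left, Finset.mem_filter]
    rintro a ⟨-, ha⟩ ⟨-, ha'⟩
    exact (Finset.mem_sdiff.mp ha').2 ha)]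
  congr 1; ext i
  simp only [Finset.mem_union, Finset.mem_filter, Finset.mem_univ, true_and, Finset.mem_sdiff]
  tauto

lemma Xs_union (K : ℕ) (α γ : ℝ) (S Ω : Finset (Fin K ⊕ Fin K)) :
    Xs K α γ (S ∪ Ω) = Xs K α γ S +
      ∑ i ∈ Finset.univ.filter (fun i : Fin K => Sum.inl i ∈ Ω \ S), xi K α γ i := by
  unfold Xs
  rw [← Finset.sum_union (by
    simp only [Finset.disjoint_left, Finset.mem_filter]
    rintro a ⟨-, ha⟩ ⟨-, ha'⟩
    exact (Finset.mem_sdiff.mp ha').2 ha)]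
  congr 1; ext i
  simp only [Finset.mem_union, Finset.mem_filter, Finset.mem_univ, true_and, Finset.mem_sdiff]
  tauto

lemma sum_sumtype (K : ℕ) (D : Finset (Fin K ⊕ Fin K)) (g : (Fin K ⊕ Fin K) → ℝ) :
    ∑ v ∈ D, g v = (∑ i ∈ Finset.univ.filter (fun i : Fin K => Sum.inl i ∈ D), g (Sum.inl i)) +
      ∑ i ∈ Finset.univ.filter (fun i : Fin K => Sum.inr i ∈ D), g (Sum.inr i) := by
  classical
  have h : ∑ v ∈ D, g v = ∑ v : Fin K ⊕ Fin K, if v ∈ D then g v else 0 := by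
    rw [Finset.sum_ite_mem, Finset.univ_inter]
  rw [h, Fintype.sum_sum_type]
  congr 1 <;> rw [Finset.sum_filter]

lemma marg_inl (K : ℕ) (α γ : ℝ) (i : Fin K) (S : Finset (Fin K ⊕ Fin K))
    (h : Sum.inl i ∉ S) :
    tightF K α γ (insert (Sum.inl i) S) - tightF K α γ S =
      xi K α γ i * (1 - α * γ * (fconv K γ ((Ws K S : ℝ)) / K)) := by
  rw [tightF_eq, tightF_eq, Ws_insert_inl, Xs_insert_inl K α γ i S h]
  ring

lemma marg_inr (K : ℕ) (α γ : ℝ) (j : Fin K) (S : Finset (Fin K ⊕ Fin K))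
    (h : Sum.inr j ∉ S) :
    tightF K α γ (insert (Sum.inr j) S) - tightF K α γ S =
      (fconv K γ ((Ws K S : ℝ) + 1) - fconv K γ ((Ws K S : ℝ))) / K *
        (1 - α * γ * Xs K α γ S) := by
  rw [tightF_eq, tightF_eq, Ws_insert_inr K j S h, Xs_insert_inr]
  push_cast
  ring

lemma xi_nonneg (K : ℕ) (hK : 2 ≤ K) (α γ : ℝ) (hα0 : 0 ≤ α) (hα1 : α ≤ 1)
    (hγ0 : 0 < γ) (hγ1 : γ ≤ 1) (i : Fin K) : 0 ≤ xi K α γ i := by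
  have hKR : (2 : ℝ) ≤ (K : ℝ) := by exact_mod_cast hK
  have h1 : γ * α ≤ 1 := mul_le_one₀ hγ1 hα0 hα1
  unfold xi
  apply mul_nonneg (by positivity)
  apply pow_nonneg
  apply div_nonneg (by linarith) (by linarith)

lemma xi_le (K : ℕ) (hK : 2 ≤ K) (α γ : ℝ) (hα0 : 0 ≤ α) (hα1 : α ≤ 1)
    (hγ0 : 0 < γ) (hγ1 : γ ≤ 1) (i : Fin K) : xi K α γ i ≤ 1 / (K : ℝ) := by
  have hKR : (2 : ℝ) ≤ (K : ℝ) := by exact_mod_cast hK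
  have h1 : γ * α ≤ 1 := mul_le_one₀ hγ1 hα0 hα1
  have h2 : 0 ≤ γ * α := mul_nonneg hγ0.le hα0
  unfold xi
  have hpow : (((K : ℝ) - γ * α) / (K : ℝ)) ^ (i : ℕ) ≤ 1 := by
    apply pow_le_one₀ (div_nonneg (by linarith) (by linarith))
    rw [div_le_one (by linarith)]
    linarith
  calc (1 / (K : ℝ)) * (((K : ℝ) - γ * α) / (K : ℝ)) ^ (i : ℕ)
      ≤ (1 / (K : ℝ)) * 1 := by
        apply mul_le_mul_of_nonneg_left hpow (by positivity)
    _ = 1 / (K : ℝ) := mul_one _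

lemma Xs_nonneg (K : ℕ) (hK : 2 ≤ K) (α γ : ℝ) (hα0 : 0 ≤ α) (hα1 : α ≤ 1)
    (hγ0 : 0 < γ) (hγ1 : γ ≤ 1) (T : Finset (Fin K ⊕ Fin K)) : 0 ≤ Xs K α γ T :=
  Finset.sum_nonneg fun i _ => xi_nonneg K hK α γ hα0 hα1 hγ0 hγ1 i

lemma Xs_le_one (K : ℕ) (hK : 2 ≤ K) (α γ : ℝ) (hα0 : 0 ≤ α) (hα1 : α ≤ 1)
    (hγ0 : 0 < γ) (hγ1 : γ ≤ 1) (T : Finset (Fin K ⊕ Fin K)) : Xs K α γ T ≤ 1 := by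
  have hKR : (0 : ℝ) < (K : ℝ) := by
    have : (2 : ℝ) ≤ (K : ℝ) := by exact_mod_cast hK
    linarith
  have h1 : Xs K α γ T ≤
      ∑ _i ∈ Finset.univ.filter (fun i : Fin K => Sum.inl i ∈ T), 1 / (K : ℝ) :=
    Finset.sum_le_sum (fun i _ => xi_le K hK α γ hα0 hα1 hγ0 hγ1 i)
  rw [Finset.sum_const, nsmul_eq_mul] at h1
  have h2 : ((Finset.univ.filter (fun i : Fin K => Sum.inl i ∈ T)).card : ℝ) ≤ (K : ℝ) := by
    have := Finset.card_filter_le (Finset.univ : Finset (Fin K)) (fun i => Sum.inl i ∈ T)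
    have h3 : (Finset.univ : Finset (Fin K)).card = K := by simp
    exact_mod_cast h3 ▸ this
  calc Xs K α γ T ≤ _ := h1
    _ ≤ (K : ℝ) * (1 / (K : ℝ)) := by
        apply mul_le_mul_of_nonneg_right h2 (by positivity)
    _ = 1 := by field_simp

lemma Ws_le (K : ℕ) (T : Finset (Fin K ⊕ Fin K)) : Ws K T ≤ K := by
  unfold Ws
  calc (Finset.univ.filter (fun i : Fin K => Sum.inr i ∈ T)).card
      ≤ (Finset.univ : Finset (Fin K)).card := Finset.card_filter_le _ _
    _ = K := by simp

lemma fconv_one (K : ℕ) (hK : 2 ≤ K) (γ : ℝ) (hγ0 : 0 < γ) : fconv K γ 1 = 1 := by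
  have hKR : (2 : ℝ) ≤ (K : ℝ) := by exact_mod_cast hK
  have hne : (K : ℝ) - 1 ≠ 0 := by linarith
  unfold fconv
  field_simp
  ring

lemma fconv_K (K : ℕ) (hK : 2 ≤ K) (γ : ℝ) (hγ0 : 0 < γ) :
    fconv K γ (K : ℝ) = (K : ℝ) * γ⁻¹ := by
  have hKR : (2 : ℝ) ≤ (K : ℝ) := by exact_mod_cast hK
  have hne : (K : ℝ) - 1 ≠ 0 := by linarith
  unfold fconv
  field_simp
  ring
lemma key (K : ℕ) (hK : 2 ≤ K) (α γ : ℝ) (hα0 : 0 ≤ α) (hα1 : α ≤ 1) (hγ0 : 0 < γ)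
    (hγ1 : γ ≤ 1) (w m : ℕ) (hwm : w + m ≤ K) (x y : ℝ)
    (hx0 : 0 ≤ x) (hx1 : x ≤ 1) (hy0 : 0 ≤ y) :
    y * (1 - α * γ * (fconv K γ (w : ℝ) / K)) +
      (m : ℝ) * ((fconv K γ ((w : ℝ) + 1) - fconv K γ (w : ℝ)) / K * (1 - α * γ * x)) ≥
    γ * ((fconv K γ ((w : ℝ) + (m : ℝ)) / K * (1 - α * γ * (x + y)) + (x + y)) -
      (fconv K γ (w : ℝ) / K * (1 - α * γ * x) + x)) := by
  have hKR : (2 : ℝ) ≤ (K : ℝ) := by exact_mod_cast hK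
  have hK1 : (1 : ℝ) ≤ (K : ℝ) - 1 := by linarith
  have hK1ne : (K : ℝ) - 1 ≠ 0 := by linarith
  have hKpos : (0 : ℝ) < K := by linarith
  have hγne : γ ≠ 0 := hγ0.ne'
  set a : ℝ := (γ⁻¹ - 1) / ((K : ℝ) - 1) with ha_def
  set b : ℝ := ((K : ℝ) - γ⁻¹) / ((K : ℝ) - 1) with hb_def
  have hγinv : 1 ≤ γ⁻¹ := by
    rw [le_inv_comm₀ one_pos hγ0]; simpa using hγ1
  have ha : 0 ≤ a := by
    apply div_nonneg (by linarith) (by linarith)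
  have hab : a + b = 1 := by
    rw [ha_def, hb_def]; field_simp; ring
  have haK : a * K + b = γ⁻¹ := by
    rw [ha_def, hb_def]; field_simp; ring
  have idz : a * (1 - γ * K) + (1 - γ) * b = 0 := by
    rw [ha_def, hb_def]; field_simp; ring
  set W : ℝ := (w : ℝ) with hW_def
  set M : ℝ := (m : ℝ) with hM_def
  have hw0 : (0 : ℝ) ≤ W := Nat.cast_nonneg w
  have hm0 : (0 : ℝ) ≤ M := Nat.cast_nonneg m
  have hwmR : W + M ≤ K := by rw [hW_def, hM_def]; exact_mod_cast hwm
  have hw1 : W = 0 ∨ 1 ≤ W := by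
    rcases Nat.eq_zero_or_pos w with h | h
    · left; rw [hW_def, h]; simp
    · right; rw [hW_def]; exact_mod_cast h
  have hm1 : M = 0 ∨ 1 ≤ M := by
    rcases Nat.eq_zero_or_pos m with h | h
    · left; rw [hM_def, h]; simp
    · right; rw [hM_def]; exact_mod_cast h
  -- values of f
  have hf0 : fconv K γ W = a * W ^ 2 + b * W := rfl
  have hfm : fconv K γ (W + M) = a * (W + M) ^ 2 + b * (W + M) := rfl
  have hf1 : fconv K γ (W + 1) = a * (W + 1) ^ 2 + b * (W + 1) := rfl
  set P0 : ℝ := fconv K γ W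
  set PM : ℝ := fconv K γ (W + M)
  set P1 : ℝ := fconv K γ (W + 1)
  clear_value a b W M P0 PM P1
  -- Claim A : M * (P1 - P0) - γ * (PM - P0) ≥ 0
  have hbr : a * (2 * W + 1) + b - γ * (a * (2 * W + M) + b) ≥ 0 := by
    have t1 : 0 ≤ a * W * (2 - γ) := mul_nonneg (mul_nonneg ha hw0) (by linarith)
    have t2 : 0 ≤ γ * (a * ((K : ℝ) - W - M)) :=
      mul_nonneg hγ0.le (mul_nonneg ha (by linarith))
    have hdec : a * (2 * W + 1) + b - γ * (a * (2 * W + M) + b)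
        = a * W * (2 - γ) + γ * (a * ((K : ℝ) - W - M)) + (a * (1 - γ * K) + (1 - γ) * b) := by
      ring
    rw [hdec, idz]; linarith
  have eA : 0 ≤ M * (P1 - P0) - γ * (PM - P0) := by
    have h1 : M * (P1 - P0) - γ * (PM - P0)
        = M * (a * (2 * W + 1) + b - γ * (a * (2 * W + M) + b)) := by
      rw [hf0, hfm, hf1]; ring
    rw [h1]
    exact mul_nonneg hm0 hbr
  -- bounds on f
  have hP0nn : 0 ≤ P0 := by
    rcases hw1 with h | h
    · rw [hf0, h]; ring_nf; exact le_refl 0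
    · rw [hf0]
      linarith [mul_nonneg ha (mul_nonneg hw0 (by linarith : (0:ℝ) ≤ W - 1)),
        mul_nonneg hw0 (by linarith : (0:ℝ) ≤ a + b)]
  have hP0PM : P0 ≤ PM := by
    rcases hm1 with h | h
    · rw [hf0, hfm, h]; ring_nf; exact le_refl _
    · rw [hf0, hfm]
      linarith [mul_nonneg (mul_nonneg ha hw0) hm0,
        mul_nonneg ha (mul_nonneg hm0 (by linarith : (0:ℝ) ≤ M - 1)),
        mul_nonneg hm0 (by linarith : (0:ℝ) ≤ a + b)]
  have hP0K : γ * P0 ≤ K := by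
    have hfK : a * (K : ℝ) ^ 2 + b * (K : ℝ) = (K : ℝ) * γ⁻¹ := by
      linear_combination (K : ℝ) * haK
    have hKW1 : (0:ℝ) ≤ (K:ℝ) + W - 1 := by linarith
    have hKW : (0:ℝ) ≤ (K:ℝ) - W := by linarith
    have hs : 0 ≤ a * ((K:ℝ) + W) + b := by
      linarith [mul_nonneg ha hKW1]
    have h2 : P0 ≤ a * (K : ℝ) ^ 2 + b * (K : ℝ) := by
      rw [hf0]
      linarith [mul_nonneg hKW hs]
    have h3 : γ * P0 ≤ γ * ((K:ℝ) * γ⁻¹) := by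
      apply mul_le_mul_of_nonneg_left _ hγ0.le
      rw [← hfK]; exact h2
    calc γ * P0 ≤ γ * ((K:ℝ) * γ⁻¹) := h3
      _ = K := by field_simp
  -- Claim B
  have eB : 0 ≤ (1 - γ) - α * γ * ((K : ℝ))⁻¹ * (P0 - γ * PM) := by
    have hEB : 0 ≤ (K : ℝ) * (1 - γ) - α * γ * (P0 - γ * PM) := by
      have u1 : 0 ≤ α * γ * γ * (PM - P0) :=
        mul_nonneg (mul_nonneg (mul_nonneg hα0 hγ0.le) hγ0.le) (by linarith)
      have u2 : 0 ≤ α * (1 - γ) * ((K : ℝ) - γ * P0) :=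
        mul_nonneg (mul_nonneg hα0 (by linarith)) (by linarith)
      have u3 : 0 ≤ (1 - α) * (1 - γ) * (K : ℝ) :=
        mul_nonneg (mul_nonneg (by linarith) (by linarith)) hKpos.le
      linarith [u1, u2, u3]
    have hrw : (1 - γ) - α * γ * ((K : ℝ))⁻¹ * (P0 - γ * PM)
        = ((K : ℝ) * (1 - γ) - α * γ * (P0 - γ * PM)) / K := by
      field_simp
    rw [hrw]
    exact div_nonneg hEB hKpos.le
  have e3 : 0 ≤ 1 - α * γ * x := by
    linarith [mul_nonneg (mul_nonneg hα0 hγ0.le) (by linarith : (0:ℝ) ≤ 1 - x),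
      mul_le_one₀ hα1 hγ0.le hγ1]
  -- combine
  have comb : y * (1 - α * γ * (P0 / K)) + M * ((P1 - P0) / K * (1 - α * γ * x)) -
      γ * ((PM / K * (1 - α * γ * (x + y)) + (x + y)) - (P0 / K * (1 - α * γ * x) + x))
      = (1 - α * γ * x) * (M * (P1 - P0) - γ * (PM - P0)) * ((K : ℝ))⁻¹ +
        y * ((1 - γ) - α * γ * ((K : ℝ))⁻¹ * (P0 - γ * PM)) := by
    field_simp
    ring
  have hKinv : (0 : ℝ) ≤ ((K : ℝ))⁻¹ := by positivity
  linarith [mul_nonneg (mul_nonneg e3 eA) hKinv, mul_nonneg hy0 eB, comb]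

/-- **The tightness function has submodularity ratio exactly `γ`.** -/
theorem tightF_submodularity_ratio (K : ℕ) (hK : 2 ≤ K)
    (α γ : ℝ) (hα0 : 0 ≤ α) (hα1 : α ≤ 1) (hγ0 : 0 < γ) (hγ1 : γ ≤ 1) :
    (∀ Ω S : Finset (Fin K ⊕ Fin K),
      ∑ ω ∈ Ω \ S, (tightF K α γ (insert ω S) - tightF K α γ S) ≥
        γ * (tightF K α γ (S ∪ Ω) - tightF K α γ S)) ∧
    (∑ i : Fin K, tightF K α γ {Sum.inr i} = 1) ∧
    (γ * tightF K α γ (Finset.univ.image (Sum.inr : Fin K → Fin K ⊕ Fin K)) = 1) ∧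
    (tightF K α γ (Finset.univ.image (Sum.inr : Fin K → Fin K ⊕ Fin K)) = 1 / γ) ∧
    (0 < (1 : ℝ) / γ) := by
  have hKR : (2 : ℝ) ≤ (K : ℝ) := by exact_mod_cast hK
  have hKne : (K : ℝ) ≠ 0 := by positivity
  have hTall : tightF K α γ (Finset.univ.image (Sum.inr : Fin K → Fin K ⊕ Fin K)) = 1 / γ := by
    rw [tightF_eq]
    have hW : Ws K (Finset.univ.image (Sum.inr : Fin K → Fin K ⊕ Fin K)) = K := by
      unfold Ws
      have : (Finset.univ.filter (fun i : Fin K =>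
          Sum.inr i ∈ Finset.univ.image (Sum.inr : Fin K → Fin K ⊕ Fin K))) = Finset.univ := by
        ext i; simp
      rw [this]; simp
    have hX : Xs K α γ (Finset.univ.image (Sum.inr : Fin K → Fin K ⊕ Fin K)) = 0 := by
      unfold Xs
      have : (Finset.univ.filter (fun i : Fin K =>
          Sum.inl i ∈ Finset.univ.image (Sum.inr : Fin K → Fin K ⊕ Fin K))) = ∅ := by
        ext i; simp
      rw [this]; simp
    rw [hW, hX, fconv_K K hK γ hγ0]
    field_simp
    ring
  refine ⟨?_, ?_, ?_, hTall, by positivity⟩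
  · intro Ω S
    classical
    set A := Finset.univ.filter (fun i : Fin K => Sum.inl i ∈ Ω \ S) with hA_def
    set B := Finset.univ.filter (fun i : Fin K => Sum.inr i ∈ Ω \ S) with hB_def
    have hsplit := sum_sumtype K (Ω \ S) (fun v => tightF K α γ (insert v S) - tightF K α γ S)
    rw [hsplit]
    have hAeq : ∀ i ∈ A, tightF K α γ (insert (Sum.inl i) S) - tightF K α γ S =
        xi K α γ i * (1 - α * γ * (fconv K γ ((Ws K S : ℝ)) / K)) := by
      intro i hi
      apply marg_inl
      rw [hA_def] at hi
      simp only [Finset.mem_filter, Finset.mem_sdiff] at hi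
      exact hi.2.2
    have hBeq : ∀ j ∈ B, tightF K α γ (insert (Sum.inr j) S) - tightF K α γ S =
        (fconv K γ ((Ws K S : ℝ) + 1) - fconv K γ ((Ws K S : ℝ))) / K *
          (1 - α * γ * Xs K α γ S) := by
      intro j hj
      apply marg_inr
      rw [hB_def] at hj
      simp only [Finset.mem_filter, Finset.mem_sdiff] at hj
      exact hj.2.2
    rw [Finset.sum_congr rfl hAeq, Finset.sum_congr rfl hBeq, ← Finset.sum_mul,
      Finset.sum_const, nsmul_eq_mul]
    rw [tightF_eq K α γ (S ∪ Ω), tightF_eq K α γ S, Ws_union, Xs_union, ← hA_def, ← hB_def]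
    have hwm : Ws K S + B.card ≤ K := by
      rw [hB_def, ← Ws_union]; exact Ws_le K (S ∪ Ω)
    have hkey := key K hK α γ hα0 hα1 hγ0 hγ1 (Ws K S) B.card hwm
      (Xs K α γ S) (∑ i ∈ A, xi K α γ i)
      (Xs_nonneg K hK α γ hα0 hα1 hγ0 hγ1 S) (Xs_le_one K hK α γ hα0 hα1 hγ0 hγ1 S)
      (Finset.sum_nonneg fun i _ => xi_nonneg K hK α γ hα0 hα1 hγ0 hγ1 i)
    push_cast at hkey ⊢
    linarith [hkey]
  · have hone : ∀ i : Fin K, tightF K α γ {Sum.inr i} = 1 / (K : ℝ) := by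
      intro i
      rw [tightF_eq]
      have hW : Ws K ({Sum.inr i} : Finset (Fin K ⊕ Fin K)) = 1 := by
        unfold Ws
        have : (Finset.univ.filter (fun j : Fin K =>
            Sum.inr j ∈ ({Sum.inr i} : Finset (Fin K ⊕ Fin K)))) = {i} := by
          ext j; simp
        rw [this]; simp
      have hX : Xs K α γ ({Sum.inr i} : Finset (Fin K ⊕ Fin K)) = 0 := by
        unfold Xs
        have : (Finset.univ.filter (fun j : Fin K =>
            Sum.inl j ∈ ({Sum.inr i} : Finset (Fin K ⊕ Fin K)))) = ∅ := by
          ext j; simp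
        rw [this]; simp
      rw [hW, hX]
      push_cast
      rw [fconv_one K hK γ hγ0]
      ring
    rw [Finset.sum_congr rfl (fun i _ => hone i), Finset.sum_const, nsmul_eq_mul]
    simp [hKne]
  · rw [hTall]
    field_simp
end

section
/- Let β, σ > 0, let V be a finite index set, and for each v ∈ V let x_v ∈ ℝ^d with ‖x_v‖₂ = 1. Let c > 0 be such that Σ_{v∈V} x_v x_vᵀ ⪯ c·I_d (for instance c = ‖X‖², the squared spectral norm of the matrix X with columns x_v). Define F_A(S) := tr((β²·I_d)^{−1}) − tr((β²·I_d + σ^{−2}·Σ_{v∈S} x_v x_vᵀ)^{−1}) for S ⊆ V. Then for all Ω, S ⊆ V: Σ_{ω ∈ Ω\S} (F_A(S ∪ {ω}) − F_A(S)) ≥ (β² / (c·(β² + σ^{−2}c)))·(F_A(S ∪ Ω) − F_A(S)); that is, the submodularity ratio of F_A is at least β²/(c(β² + σ^{−2}c)). -/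
open Finset Matrix

section Aux

variable {n : Type*} [Fintype n] [DecidableEq n]

lemma psd_vecMulVec (y : n → ℝ) : (vecMulVec y y).PosSemidef := by
  rw [posSemidef_iff_dotProduct_mulVec]; constructor
  · ext i j
    simp [conjTranspose_apply, vecMulVec_apply, mul_comm]
  · intro z
    have : (vecMulVec y y) *ᵥ z = (y ⬝ᵥ z) • y := by
      ext i
      simp [mulVec, vecMulVec_apply, dotProduct, Finset.mul_sum]
      rw [Finset.sum_mul]
      congr 1; ext j; ring
    rw [this]
    simp only [star_trivial, dotProduct_smul, smul_eq_mul]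
    rw [dotProduct_comm]
    exact mul_self_nonneg _

lemma trace_nonneg_of_psd {A : Matrix n n ℝ} (hA : A.PosSemidef) : 0 ≤ A.trace := by
  rw [Matrix.trace]
  refine Finset.sum_nonneg fun i _ => ?_
  have := hA.dotProduct_mulVec_nonneg (Pi.single i 1)
  simpa [dotProduct, mulVec, Pi.single_apply] using this

lemma trace_mul_vecMulVec (B : Matrix n n ℝ) (u v : n → ℝ) :
    (B * vecMulVec u v).trace = v ⬝ᵥ (B *ᵥ u) := by
  simp only [Matrix.trace, diag_apply, mul_apply, vecMulVec_apply, dotProduct, mulVec]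
  rw [Finset.sum_comm]
  simp [dotProduct, Finset.mul_sum]
  ring_nf
  rw [Finset.sum_comm]
  congr 1; ext i; congr 1; ext j; ring

lemma resolvent' {M N : Matrix n n ℝ} (hM : IsUnit M.det) (hN : IsUnit N.det) :
    M⁻¹ - N⁻¹ = M⁻¹ * (N - M) * N⁻¹ := by
  rw [mul_sub, sub_mul, Matrix.mul_assoc, Matrix.mul_nonsing_inv _ hN,
    Matrix.nonsing_inv_mul _ hM, Matrix.mul_one, Matrix.one_mul]

lemma psd_smul {a : ℝ} {A : Matrix n n ℝ} (ha : 0 ≤ a) (hA : A.PosSemidef) :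
    (a • A).PosSemidef := by
  rw [posSemidef_iff_dotProduct_mulVec]; constructor
  · ext i j
    have := hA.1
    rw [IsHermitian] at this
    simp [conjTranspose_apply, vecMulVec_apply]
    nth_rewrite 2 [← this]
    simp [conjTranspose_apply]
  · intro z
    rw [smul_mulVec, dotProduct_smul, smul_eq_mul]
    exact mul_nonneg ha (hA.dotProduct_mulVec_nonneg z)

lemma psd_sum {ι : Type*} (s : Finset ι) (f : ι → Matrix n n ℝ)
    (h : ∀ i ∈ s, (f i).PosSemidef) : (∑ i ∈ s, f i).PosSemidef := by
  classical
  induction s using Finset.induction_on with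
  | empty => simpa using Matrix.PosSemidef.zero
  | insert _ _ hx ih =>
    rw [Finset.sum_insert hx]
    exact ((h _ (Finset.mem_insert_self _ _))).add (ih fun i hi => h i (Finset.mem_insert_of_mem hi))

lemma posDef_smul_one {b : ℝ} (hb : 0 < b) : (b • (1 : Matrix n n ℝ)).PosDef := by
  rw [posDef_iff_dotProduct_mulVec]; constructor
  · ext i j
    simp [conjTranspose_apply, one_apply, eq_comm]
  · intro z hz
    rw [smul_mulVec, one_mulVec, star_trivial, dotProduct_smul, smul_eq_mul]
    have : 0 < z ⬝ᵥ z := by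
      rw [show z ⬝ᵥ z = star z ⬝ᵥ z from by simp [star_trivial]]
      exact dotProduct_star_self_pos_iff.mpr hz
    positivity

lemma dot_symm_move {A : Matrix n n ℝ} (hA : A.IsHermitian) (v w : n → ℝ) :
    v ⬝ᵥ (A *ᵥ w) = (A *ᵥ v) ⬝ᵥ w := by
  rw [dotProduct_mulVec, ← vecMul_transpose]
  congr 1
  rw [← conjTranspose_eq_transpose_of_trivial, hA.eq]

lemma vecMulVec_mulVec' (y z : n → ℝ) : vecMulVec y y *ᵥ z = (y ⬝ᵥ z) • y := by
  ext i
  simp [mulVec, vecMulVec_apply, dotProduct, Finset.mul_sum]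
  rw [Finset.sum_mul]
  congr 1; ext j; ring

lemma key_upper {M Δ : Matrix n n ℝ} (hM : M.PosDef) (hΔ : Δ.PosSemidef) :
    M⁻¹.trace - (M + Δ)⁻¹.trace ≤ (M⁻¹ * Δ * M⁻¹).trace := by
  set N := M + Δ with hN_def
  have hN : N.PosDef := hM.add_posSemidef hΔ
  have hMd : IsUnit M.det := hM.det_pos.ne'.isUnit
  have hNd : IsUnit N.det := hN.det_pos.ne'.isUnit
  have hNM : N - M = Δ := by simp [hN_def]
  have h1 : M⁻¹ - N⁻¹ = M⁻¹ * Δ * N⁻¹ := by rw [resolvent' hMd hNd, hNM]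
  have h2 : M⁻¹ - N⁻¹ = N⁻¹ * Δ * M⁻¹ := by
    have := resolvent' hNd hMd
    rw [show M - N = -Δ from by simp [hN_def]] at this
    have : N⁻¹ - M⁻¹ = -(N⁻¹ * Δ * M⁻¹) := by
      rw [this]; noncomm_ring
    linear_combination (norm := noncomm_ring) -this
  have key : M⁻¹ * Δ * M⁻¹ - (M⁻¹ - N⁻¹) = M⁻¹ * Δ * N⁻¹ * Δ * M⁻¹ := by
    calc M⁻¹ * Δ * M⁻¹ - (M⁻¹ - N⁻¹) = M⁻¹ * Δ * M⁻¹ - M⁻¹ * Δ * N⁻¹ := by rw [← h1]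
    _ = M⁻¹ * Δ * (M⁻¹ - N⁻¹) := by noncomm_ring
    _ = M⁻¹ * Δ * (N⁻¹ * Δ * M⁻¹) := by rw [← h2]
    _ = M⁻¹ * Δ * N⁻¹ * Δ * M⁻¹ := by noncomm_ring
  have hpsd : (M⁻¹ * Δ * N⁻¹ * Δ * M⁻¹).PosSemidef := by
    have hherm : (Δ * M⁻¹)ᴴ = M⁻¹ * Δ := by
      rw [conjTranspose_mul, hΔ.1.eq, (hM.isHermitian.inv).eq]
    have := (hN.inv.posSemidef).conjTranspose_mul_mul_same (Δ * M⁻¹)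
    rw [hherm] at this
    rwa [← Matrix.mul_assoc] at this
  have := trace_nonneg_of_psd hpsd
  rw [← key, Matrix.trace_sub, Matrix.trace_sub] at this
  linarith

lemma key_marginal {M : Matrix n n ℝ} (hM : M.PosDef) (y : n → ℝ) {t : ℝ} (ht : 0 ≤ t) :
    M⁻¹.trace - (M + t • vecMulVec y y)⁻¹.trace
      = t * (1 + t * (y ⬝ᵥ (M⁻¹ *ᵥ y)))⁻¹ * ((M⁻¹ *ᵥ y) ⬝ᵥ (M⁻¹ *ᵥ y)) := by
  set u := M⁻¹ *ᵥ y with hu_def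
  set q := y ⬝ᵥ u with hq_def
  set N := M + t • vecMulVec y y with hN_def
  have hΔ : (t • vecMulVec y y).PosSemidef := psd_smul ht (psd_vecMulVec y)
  have hN : N.PosDef := hM.add_posSemidef hΔ
  have hMd : IsUnit M.det := hM.det_pos.ne'.isUnit
  have hNd : IsUnit N.det := hN.det_pos.ne'.isUnit
  have hMu : M *ᵥ u = y := by
    rw [hu_def, mulVec_mulVec, Matrix.mul_nonsing_inv _ hMd, one_mulVec]
  have hq0 : 0 ≤ q := by
    have h := hM.posSemidef.dotProduct_mulVec_nonneg u
    rw [star_trivial, hMu] at h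
    rw [hq_def, dotProduct_comm]; exact h
  have hden : 0 < 1 + t * q := by positivity
  have hNu : N *ᵥ u = (1 + t * q) • y := by
    rw [hN_def, add_mulVec, hMu, smul_mulVec, vecMulVec_mulVec']
    ext i
    simp [hq_def, smul_smul]
    ring
  have hNy : N⁻¹ *ᵥ y = (1 + t * q)⁻¹ • u := by
    have h1 : N⁻¹ *ᵥ (N *ᵥ u) = u := by
      rw [mulVec_mulVec, Matrix.nonsing_inv_mul _ hNd, one_mulVec]
    rw [hNu, mulVec_smul] at h1
    rw [← h1, smul_smul, inv_mul_cancel₀ hden.ne', one_smul]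
  have hres : M⁻¹ - N⁻¹ = M⁻¹ * (t • vecMulVec y y) * N⁻¹ := by
    rw [resolvent' hMd hNd]
    congr 1
    rw [hN_def]; noncomm_ring
  have htr : M⁻¹.trace - N⁻¹.trace = t * (y ⬝ᵥ (N⁻¹ *ᵥ u)) := by
    rw [← Matrix.trace_sub, hres, Matrix.trace_mul_cycle, Matrix.mul_smul, Matrix.trace_smul,
      trace_mul_vecMulVec, smul_eq_mul, ← Matrix.mulVec_mulVec]
  rw [htr, dot_symm_move hN.inv.1 y u, hNy, smul_dotProduct, smul_eq_mul, hq_def]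
  ring

lemma dot_self_nonneg (u : n → ℝ) : 0 ≤ u ⬝ᵥ u :=
  Finset.sum_nonneg fun i _ => mul_self_nonneg _

lemma q_bound {M P : Matrix n n ℝ} {b : ℝ} (hb : 0 < b) (hP : P.PosSemidef)
    (hMdef : M = b • 1 + P) {y : n → ℝ} (hy : y ⬝ᵥ y = 1) :
    y ⬝ᵥ (M⁻¹ *ᵥ y) ≤ b⁻¹ := by
  have hM : M.PosDef := hMdef ▸ (posDef_smul_one hb).add_posSemidef hP
  have hMd : IsUnit M.det := hM.det_pos.ne'.isUnit
  set u := M⁻¹ *ᵥ y with hu_def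
  have hMu : M *ᵥ u = y := by
    rw [hu_def, mulVec_mulVec, Matrix.mul_nonsing_inv _ hMd, one_mulVec]
  have huu : 0 ≤ u ⬝ᵥ u := dot_self_nonneg u
  have hlow : b * (u ⬝ᵥ u) ≤ y ⬝ᵥ u := by
    have h1 : y ⬝ᵥ u = u ⬝ᵥ (M *ᵥ u) := by rw [hMu, dotProduct_comm]
    have h2 : u ⬝ᵥ (M *ᵥ u) = b * (u ⬝ᵥ u) + u ⬝ᵥ (P *ᵥ u) := by
      rw [hMdef, add_mulVec, smul_mulVec, one_mulVec, dotProduct_add, dotProduct_smul,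
        smul_eq_mul]
    have h3 : 0 ≤ u ⬝ᵥ (P *ᵥ u) := by simpa [star_trivial] using hP.dotProduct_mulVec_nonneg u
    linarith [h1, h2, h3]
  have hcs : (y ⬝ᵥ u) ^ 2 ≤ u ⬝ᵥ u := by
    have h := Finset.sum_mul_sq_le_sq_mul_sq Finset.univ y u
    have hy2 : ∑ i, y i ^ 2 = 1 := by
      rw [← hy]; simp [dotProduct, sq]
    have hu2 : ∑ i, u i ^ 2 = u ⬝ᵥ u := by simp [dotProduct, sq]
    calc (y ⬝ᵥ u) ^ 2 = (∑ i, y i * u i) ^ 2 := rfl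
      _ ≤ (∑ i, y i ^ 2) * ∑ i, u i ^ 2 := h
      _ = u ⬝ᵥ u := by rw [hy2, hu2, one_mul]
  have h4 : b * (y ⬝ᵥ u) ^ 2 ≤ y ⬝ᵥ u := le_trans (mul_le_mul_of_nonneg_left hcs hb.le) hlow
  have hq0 : 0 ≤ y ⬝ᵥ u := le_trans (mul_nonneg hb.le huu) hlow
  by_contra hcon
  push_neg at hcon
  have hqpos : 0 < y ⬝ᵥ u := lt_trans (by positivity) hcon
  have h5 : 1 < b * (y ⬝ᵥ u) := by
    have := mul_lt_mul_of_pos_left hcon hb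
    rwa [mul_inv_cancel₀ hb.ne'] at this
  nlinarith [mul_lt_mul_of_pos_right h5 hqpos]

lemma sum_mulVec' {ι : Type*} (s : Finset ι) (f : ι → Matrix n n ℝ) (v : n → ℝ) :
    (∑ i ∈ s, f i) *ᵥ v = ∑ i ∈ s, f i *ᵥ v := by
  classical
  induction s using Finset.induction_on with
  | empty => simp [Matrix.zero_mulVec]
  | insert _ _ h ih => rw [Finset.sum_insert h, Finset.sum_insert h, Matrix.add_mulVec, ih]

lemma dotProduct_sum' {ι : Type*} (s : Finset ι) (v : n → ℝ) (w : ι → n → ℝ) :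
    v ⬝ᵥ (∑ i ∈ s, w i) = ∑ i ∈ s, v ⬝ᵥ w i := by
  classical
  induction s using Finset.induction_on with
  | empty => simp
  | insert _ _ h ih => rw [Finset.sum_insert h, Finset.sum_insert h, dotProduct_add, ih]

end Aux

/-- The Bayesian A-optimality objective
`F_A(S) = tr((β²I)⁻¹) − tr((β²I + σ⁻²·Σ_{v∈S} x_v x_vᵀ)⁻¹)`. -/
noncomputable def bayesA {V : Type*} [DecidableEq V] (d : ℕ) (β σ : ℝ)
    (x : V → Fin d → ℝ) (S : Finset V) : ℝ :=
  Matrix.trace ((β ^ 2 • (1 : Matrix (Fin d) (Fin d) ℝ))⁻¹) -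
    Matrix.trace ((β ^ 2 • (1 : Matrix (Fin d) (Fin d) ℝ) +
      (σ ^ 2)⁻¹ • ∑ v ∈ S, Matrix.vecMulVec (x v) (x v))⁻¹)

/-- **Submodularity-ratio bound for Bayesian A-optimality.** If the stimuli are
normalized (`‖x_v‖₂ = 1`) and `Σ_{v∈V} x_v x_vᵀ ⪯ c·I` with `c > 0`, then for
all `Ω, S ⊆ V`,
`Σ_{ω∈Ω\S} ρ_ω(S) ≥ (β²/(c(β² + σ⁻²c)))·ρ_Ω(S)`, i.e. the submodularity ratio
of `F_A` is at least `β²/(c(β² + σ⁻²c))`. -/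
theorem bayesA_submodularity_ratio {V : Type*} [DecidableEq V] [Fintype V]
    (d : ℕ) (β σ c : ℝ) (hβ : 0 < β) (hσ : 0 < σ) (hc : 0 < c)
    (x : V → Fin d → ℝ)
    (hnorm : ∀ v : V, ∑ i, (x v i) ^ 2 = 1)
    (hbound : (c • (1 : Matrix (Fin d) (Fin d) ℝ) -
      ∑ v ∈ Finset.univ, Matrix.vecMulVec (x v) (x v)).PosSemidef) :
    ∀ Ω S : Finset V,
      ∑ ω ∈ Ω \ S, (bayesA d β σ x (insert ω S) - bayesA d β σ x S) ≥
        (β ^ 2 / (c * (β ^ 2 + (σ ^ 2)⁻¹ * c))) *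
          (bayesA d β σ x (S ∪ Ω) - bayesA d β σ x S) := by
  intro Ω S
  classical
  set t : ℝ := (σ ^ 2)⁻¹ with ht_def
  have ht : 0 < t := by positivity
  have hβ2 : (0:ℝ) < β ^ 2 := by positivity
  set W : V → Matrix (Fin d) (Fin d) ℝ := fun v => vecMulVec (x v) (x v) with hW_def
  set M : Finset V → Matrix (Fin d) (Fin d) ℝ :=
    fun T => β ^ 2 • 1 + t • ∑ v ∈ T, W v with hM_def
  have hPsd : ∀ T : Finset V, (t • ∑ v ∈ T, W v).PosSemidef := fun T =>
    psd_smul ht.le (psd_sum _ _ fun v _ => psd_vecMulVec (x v))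
  have hMpd : ∀ T, (M T).PosDef := fun T => (posDef_smul_one hβ2).add_posSemidef (hPsd T)
  have hbay : ∀ T : Finset V, bayesA d β σ x T
      = Matrix.trace ((β ^ 2 • (1 : Matrix (Fin d) (Fin d) ℝ))⁻¹) -
        Matrix.trace ((M T)⁻¹) := fun T => rfl
  have hdot : ∀ v : V, x v ⬝ᵥ x v = 1 := fun v => by
    rw [← hnorm v]; simp [dotProduct, sq]
  set u : V → Fin d → ℝ := fun ω => (M S)⁻¹ *ᵥ x ω with hu_def
  set q : V → ℝ := fun ω => x ω ⬝ᵥ u ω with hq_def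
  set k : ℝ := β ^ 2 / (β ^ 2 + t) with hk_def
  set γ : ℝ := β ^ 2 / (c * (β ^ 2 + t * c)) with hγ_def
  have hq0 : ∀ ω : V, 0 ≤ q ω := fun ω => by
    have h := ((hMpd S).inv).posSemidef.dotProduct_mulVec_nonneg (x ω)
    simpa [star_trivial] using h
  have hqle : ∀ ω : V, q ω ≤ (β ^ 2)⁻¹ := fun ω =>
    q_bound hβ2 (hPsd S) rfl (hdot ω)
  have huu0 : ∀ ω : V, 0 ≤ u ω ⬝ᵥ u ω := fun ω => dot_self_nonneg _
  -- per-element lower bound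
  have hmarg : ∀ ω ∈ Ω \ S,
      k * (t * (u ω ⬝ᵥ u ω)) ≤ bayesA d β σ x (insert ω S) - bayesA d β σ x S := by
    intro ω hω
    have hωS : ω ∉ S := (Finset.mem_sdiff.mp hω).2
    have hins : M (insert ω S) = M S + t • vecMulVec (x ω) (x ω) := by
      rw [hM_def]
      simp only
      rw [Finset.sum_insert hωS, smul_add]
      abel
    have heq : bayesA d β σ x (insert ω S) - bayesA d β σ x S
        = t * (1 + t * q ω)⁻¹ * (u ω ⬝ᵥ u ω) := by
      rw [hbay, hbay, hins]
      have := key_marginal (hMpd S) (x ω) ht.le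
      rw [← this]
      ring
    rw [heq]
    have hden : 0 < 1 + t * q ω := by
      have := hq0 ω; positivity
    have hkinv : k ≤ (1 + t * q ω)⁻¹ := by
      have hmul : k * (1 + t * q ω) ≤ 1 := by
        rw [hk_def, div_mul_eq_mul_div, div_le_one (by positivity)]
        have h1 : β ^ 2 * q ω ≤ 1 := by
          have := mul_le_mul_of_nonneg_left (hqle ω) hβ2.le
          rwa [mul_inv_cancel₀ hβ2.ne'] at this
        nlinarith [ht.le, h1]
      calc k = k * (1 + t * q ω) * (1 + t * q ω)⁻¹ := by field_simp
        _ ≤ 1 * (1 + t * q ω)⁻¹ := mul_le_mul_of_nonneg_right hmul (by positivity)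
        _ = (1 + t * q ω)⁻¹ := one_mul _
    calc k * (t * (u ω ⬝ᵥ u ω)) = t * k * (u ω ⬝ᵥ u ω) := by ring
      _ ≤ t * (1 + t * q ω)⁻¹ * (u ω ⬝ᵥ u ω) := by
          apply mul_le_mul_of_nonneg_right _ (huu0 ω)
          exact mul_le_mul_of_nonneg_left hkinv ht.le
  by_cases hT : Ω \ S = ∅
  · have hsub : Ω ⊆ S := Finset.sdiff_eq_empty_iff_subset.mp hT
    have hun : S ∪ Ω = S := Finset.union_eq_left.mpr hsub
    rw [hT, hun]
    simp
  · -- c ≥ 1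
    obtain ⟨ω₀, hω₀⟩ := Finset.nonempty_iff_ne_empty.mpr hT
    have hc1 : (1:ℝ) ≤ c := by
      have h := hbound.dotProduct_mulVec_nonneg (x ω₀)
      rw [star_trivial, sub_mulVec, smul_mulVec, one_mulVec, dotProduct_sub,
        dotProduct_smul, smul_eq_mul, hdot ω₀, mul_one, sum_mulVec' ,
        dotProduct_sum'] at h
      have hterm : ∀ v : V, x ω₀ ⬝ᵥ (vecMulVec (x v) (x v) *ᵥ x ω₀) = (x v ⬝ᵥ x ω₀) ^ 2 := by
        intro v
        rw [vecMulVec_mulVec', dotProduct_smul, smul_eq_mul, dotProduct_comm]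
        ring
      simp only [hterm] at h
      have h1 : (x ω₀ ⬝ᵥ x ω₀) ^ 2 ≤ ∑ v : V, (x v ⬝ᵥ x ω₀) ^ 2 :=
        Finset.single_le_sum (f := fun v => (x v ⬝ᵥ x ω₀) ^ 2)
          (fun v _ => sq_nonneg _) (Finset.mem_univ ω₀)
      rw [hdot ω₀] at h1
      norm_num at h1
      linarith
    -- upper bound for the union term
    have hMU : M (S ∪ Ω) = M S + t • ∑ ω ∈ Ω \ S, W ω := by
      rw [hM_def]
      simp only
      rw [show S ∪ Ω = S ∪ (Ω \ S) from (Finset.union_sdiff_self_eq_union).symm,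
        Finset.sum_union Finset.disjoint_sdiff, smul_add]
      abel
    have hupper : bayesA d β σ x (S ∪ Ω) - bayesA d β σ x S
        ≤ ∑ ω ∈ Ω \ S, t * (u ω ⬝ᵥ u ω) := by
      have h1 := key_upper (hMpd S) (hPsd (Ω \ S) : (t • ∑ v ∈ Ω \ S, W v).PosSemidef)
      have h2 : ((M S)⁻¹ * (t • ∑ v ∈ Ω \ S, W v) * (M S)⁻¹).trace
          = ∑ ω ∈ Ω \ S, t * (u ω ⬝ᵥ u ω) := by
        rw [Matrix.mul_smul, Matrix.smul_mul, Matrix.trace_smul, Matrix.mul_sum,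
          Matrix.sum_mul, Matrix.trace_sum, smul_eq_mul, Finset.mul_sum]
        refine Finset.sum_congr rfl fun ω hω => ?_
        congr 1
        rw [Matrix.trace_mul_cycle ((M S)⁻¹) (W ω) ((M S)⁻¹), trace_mul_vecMulVec,
          ← Matrix.mulVec_mulVec]
        rw [dot_symm_move ((hMpd S).inv).1]
      rw [hbay, hbay, hMU]
      have h3 : Matrix.trace ((M S)⁻¹) - Matrix.trace ((M S + t • ∑ v ∈ Ω \ S, W v)⁻¹)
          ≤ ∑ ω ∈ Ω \ S, t * (u ω ⬝ᵥ u ω) := h2 ▸ h1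
      linarith
    have hTv0 : 0 ≤ ∑ ω ∈ Ω \ S, t * (u ω ⬝ᵥ u ω) :=
      Finset.sum_nonneg fun ω _ => mul_nonneg ht.le (huu0 ω)
    have hγ0 : 0 ≤ γ := by positivity
    have hγk : γ ≤ k := by
      rw [hγ_def, hk_def]
      apply div_le_div_of_nonneg_left hβ2.le (by positivity)
      nlinarith [mul_nonneg (sub_nonneg.mpr hc1) hβ2.le,
        mul_nonneg (mul_nonneg ht.le (sub_nonneg.mpr hc1)) (by linarith : (0:ℝ) ≤ c + 1)]
    have hsum : k * ∑ ω ∈ Ω \ S, t * (u ω ⬝ᵥ u ω)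
        ≤ ∑ ω ∈ Ω \ S, (bayesA d β σ x (insert ω S) - bayesA d β σ x S) := by
      rw [Finset.mul_sum]
      exact Finset.sum_le_sum hmarg
    have step1 : γ * (bayesA d β σ x (S ∪ Ω) - bayesA d β σ x S)
        ≤ γ * ∑ ω ∈ Ω \ S, t * (u ω ⬝ᵥ u ω) := mul_le_mul_of_nonneg_left hupper hγ0
    have step2 : γ * ∑ ω ∈ Ω \ S, t * (u ω ⬝ᵥ u ω)
        ≤ k * ∑ ω ∈ Ω \ S, t * (u ω ⬝ᵥ u ω) := mul_le_mul_of_nonneg_right hγk hTv0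
    linarith
end

section
/- Let B and D be real symmetric d×d matrices with B positive definite, D positive semidefinite, and let M > 0 satisfy B ⪯ M·I_d and B + D ⪯ M·I_d. Then tr(B^{−1}) − tr((B + D)^{−1}) ≥ tr(D)/M². -/
open Matrix
open scoped MatrixOrder
variable {d : ℕ}

lemma psd_trace_nonneg {A : Matrix (Fin d) (Fin d) ℝ} (hA : A.PosSemidef) :
    0 ≤ A.trace := by
  apply Finset.sum_nonneg
  intro i _
  simpa using hA.dotProduct_mulVec_nonneg (Pi.single i 1)

lemma psd_smul_s15 {A : Matrix (Fin d) (Fin d) ℝ} (hA : A.PosSemidef) {c : ℝ}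
    (hc : 0 ≤ c) : (c • A).PosSemidef := by
  constructor
  · unfold Matrix.IsHermitian
    rw [conjTranspose_smul, hA.1]
    simp
  · exact (hA.smul hc).2

lemma psd_trace_mul_nonneg {A B : Matrix (Fin d) (Fin d) ℝ}
    (hA : A.PosSemidef) (hB : B.PosSemidef) : 0 ≤ (A * B).trace := by
  have h1 : A * B = CFC.sqrt A * (CFC.sqrt A * B) := by
    rw [← mul_assoc, CFC.sqrt_mul_sqrt_self A hA.nonneg]
  rw [h1, trace_mul_comm, mul_assoc]
  have h2 : ((CFC.sqrt A)ᴴ * B * CFC.sqrt A).PosSemidef :=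
    hB.conjTranspose_mul_mul_same (CFC.sqrt A)
  rw [(CFC.sqrt_nonneg A).posSemidef.1] at h2
  exact psd_trace_nonneg (by rwa [mul_assoc] at h2)


/-- **Trace lower bound for PSD perturbations.** If `B` is positive definite,
`D` is positive semidefinite, and `B ⪯ M·I`, `B + D ⪯ M·I` for some `M > 0`,
then `tr(B⁻¹) − tr((B + D)⁻¹) ≥ tr(D)/M²`. -/
theorem trace_inv_sub_trace_inv_ge (d : ℕ) (B D : Matrix (Fin d) (Fin d) ℝ)
    (hB : B.PosDef) (hD : D.PosSemidef) (M : ℝ) (hM : 0 < M)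
    (hBM : (M • (1 : Matrix (Fin d) (Fin d) ℝ) - B).PosSemidef)
    (hBDM : (M • (1 : Matrix (Fin d) (Fin d) ℝ) - (B + D)).PosSemidef) :
    Matrix.trace B⁻¹ - Matrix.trace (B + D)⁻¹ ≥ Matrix.trace D / M ^ 2 := by
  set S := B + D with hSdef
  have hS : S.PosDef := hB.add_posSemidef hD
  set C := S⁻¹ with hCdef
  have hC : C.PosDef := hS.inv
  have hCS : C * S = 1 := nonsing_inv_mul _ (isUnit_iff_isUnit_det _ |>.mp hS.isUnit)
  have hSC : S * C = 1 := mul_nonsing_inv _ (isUnit_iff_isUnit_det _ |>.mp hS.isUnit)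
  have hBiB : B⁻¹ * B = 1 := nonsing_inv_mul _ (isUnit_iff_isUnit_det _ |>.mp hB.isUnit)
  have hBBi : B * B⁻¹ = 1 := mul_nonsing_inv _ (isUnit_iff_isUnit_det _ |>.mp hB.isUnit)
  -- key identity
  have h1 : C * D = 1 - C * B := by
    have : C * B + C * D = 1 := by rw [← mul_add, ← hSdef, hCS]
    linear_combination (norm := noncomm_ring) this
  have h2 : C * D * B⁻¹ = B⁻¹ - C := by
    rw [h1, sub_mul, one_mul, mul_assoc, hBBi, mul_one]
  have key : B⁻¹ - C = C*D*C + C*D*B⁻¹*D*C := by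
    have e1 : C*D*C + C*D*B⁻¹*D*C = C*D*B⁻¹*(B*C) + C*D*B⁻¹*(D*C) := by
      have : C*D*B⁻¹*(B*C) = C*D*C := by
        calc C*D*B⁻¹*(B*C) = C*D*(B⁻¹*B)*C := by noncomm_ring
        _ = C*D*C := by rw [hBiB, mul_one]
      rw [this]
      noncomm_ring
    rw [e1, ← mul_add, ← add_mul, ← hSdef, hSC, mul_one, h2]
  -- second term PSD
  have hT : (C*D*B⁻¹*D*C).PosSemidef := by
    have h3 := hB.inv.posSemidef.mul_mul_conjTranspose_same (C*D)
    have h4 : (C*D)ᴴ = D*C := by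
      rw [conjTranspose_mul, hD.1, hC.posSemidef.1]
    rw [h4] at h3
    rwa [show C*D*B⁻¹*(D*C) = C*D*B⁻¹*D*C by noncomm_ring] at h3
  -- sqrt of C and commutation
  set sq := CFC.sqrt C with hsqdef
  have hsqsq : sq * sq = C := CFC.sqrt_mul_sqrt_self C hC.posSemidef.nonneg
  have hcomm : C * sq = sq * C := by
    have h5 := mul_assoc sq sq sq
    rwa [hsqsq] at h5
  have hScomm : S * sq = sq * S := by
    calc S * sq = S * sq * (C * S) := by rw [hCS, mul_one]
    _ = S * (sq * C) * S := by noncomm_ring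
    _ = S * (C * sq) * S := by rw [hcomm]
    _ = (S * C) * (sq * S) := by noncomm_ring
    _ = sq * S := by rw [hSC, one_mul]
  have h5 : sq * S * sq = 1 := by
    rw [← hScomm, mul_assoc, hsqsq, hSC]
  -- C ⪰ M⁻¹ • 1
  have h6 : sq * (M • (1 : Matrix (Fin d) (Fin d) ℝ) - S) * sq = M • C - 1 := by
    rw [mul_sub, sub_mul, h5, mul_smul_comm, mul_one, smul_mul_assoc, hsqsq]
  have hCM : (C - M⁻¹ • (1 : Matrix (Fin d) (Fin d) ℝ)).PosSemidef := by
    have h7 := hBDM.conjTranspose_mul_mul_same sq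
    rw [(CFC.sqrt_nonneg C).posSemidef.1, h6] at h7
    have h8 : C - M⁻¹ • (1 : Matrix (Fin d) (Fin d) ℝ) = M⁻¹ • (M • C - 1) := by
      rw [smul_sub, smul_smul, inv_mul_cancel₀ hM.ne', one_smul]
    rw [h8]
    exact psd_smul_s15 h7 (inv_nonneg.mpr hM.le)
  -- C*C ⪰ M⁻² • 1
  set E := C - M⁻¹ • (1 : Matrix (Fin d) (Fin d) ℝ) with hEdef
  have hP : (C*C - (M⁻¹*M⁻¹) • (1 : Matrix (Fin d) (Fin d) ℝ)).PosSemidef := by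
    have h9 : C*C - (M⁻¹*M⁻¹) • (1 : Matrix (Fin d) (Fin d) ℝ)
        = E*E + (2*M⁻¹) • E := by
      rw [hEdef]
      simp only [sub_mul, mul_sub, smul_mul_assoc, mul_smul_comm, smul_smul,
        smul_sub, mul_one, one_mul]
      module
    rw [h9]
    have hEE : (E*E).PosSemidef := by
      have := posSemidef_conjTranspose_mul_self E
      rwa [hCM.1] at this
    exact hEE.add (psd_smul_s15 hCM (by positivity))
  -- trace bounds
  have t1 : 0 ≤ (C*D*B⁻¹*D*C).trace := psd_trace_nonneg hT
  have t2 : (C*D*C).trace ≥ (M⁻¹*M⁻¹) * D.trace := by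
    have e2 : (C*D*C).trace = ((C*C)*D).trace := trace_mul_cycle C D C
    have e3 : (C*C)*D = (C*C - (M⁻¹*M⁻¹) • (1 : Matrix (Fin d) (Fin d) ℝ))*D
        + (M⁻¹*M⁻¹) • D := by
      rw [sub_mul, smul_mul_assoc, one_mul, sub_add_cancel]
    have t3 := psd_trace_mul_nonneg hP hD
    rw [e2, e3, trace_add, trace_smul]
    simp only [smul_eq_mul]
    linarith
  have final : B⁻¹.trace - C.trace = (C*D*C).trace + (C*D*B⁻¹*D*C).trace := by
    rw [← trace_add, ← key, trace_sub]
  have hM2 : Matrix.trace D / M ^ 2 = (M⁻¹*M⁻¹) * D.trace := by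
    rw [pow_two, div_eq_mul_inv, _root_.mul_inv_rev, mul_comm]
  rw [ge_iff_le, hM2]
  linarith
end

section
/- Let B and D be real symmetric d×d matrices with β²·I_d ⪯ B for some β > 0, D positive semidefinite of rank at most r, and B + D ⪯ M·I_d for some M ≥ β². Then tr(B^{−1}) − tr((B + D)^{−1}) ≤ r·(1/β² − 1/M). -/
open Matrix
open scoped RealInnerProductSpace

section Helpers
variable {n : Type*} [Fintype n] [DecidableEq n]

lemma dot_eigvec {A : Matrix n n ℝ} (hA : A.IsHermitian) (i : n) :
    star (⇑(hA.eigenvectorBasis i)) ⬝ᵥ ⇑(hA.eigenvectorBasis i) = 1 := by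
  have h := hA.eigenvectorBasis.orthonormal.1 i
  have h2 : ⟪hA.eigenvectorBasis i, hA.eigenvectorBasis i⟫ = 1 := by
    rw [real_inner_self_eq_norm_sq, h]; norm_num
  rwa [EuclideanSpace.inner_eq_star_dotProduct] at h2

lemma dot_eigvec_mulVec {A : Matrix n n ℝ} (hA : A.IsHermitian) (i : n) :
    star (⇑(hA.eigenvectorBasis i)) ⬝ᵥ (A *ᵥ ⇑(hA.eigenvectorBasis i)) = hA.eigenvalues i := by
  rw [hA.mulVec_eigenvectorBasis, dotProduct_smul, dot_eigvec hA i, smul_eq_mul, mul_one]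

lemma eig_le_of_psd {A : Matrix n n ℝ} (hA : A.IsHermitian) {c : ℝ}
    (h : (c • (1 : Matrix n n ℝ) - A).PosSemidef) (i : n) : hA.eigenvalues i ≤ c := by
  have h2 := h.dotProduct_mulVec_nonneg (⇑(hA.eigenvectorBasis i))
  rw [sub_mulVec, dotProduct_sub, dot_eigvec_mulVec hA i, smul_mulVec, one_mulVec,
    dotProduct_smul, dot_eigvec hA i, smul_eq_mul, mul_one] at h2
  linarith

lemma le_eig_of_psd {A : Matrix n n ℝ} (hA : A.IsHermitian) {c : ℝ}
    (h : (A - c • (1 : Matrix n n ℝ)).PosSemidef) (i : n) : c ≤ hA.eigenvalues i := by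
  have h2 := h.dotProduct_mulVec_nonneg (⇑(hA.eigenvectorBasis i))
  rw [sub_mulVec, dotProduct_sub, dot_eigvec_mulVec hA i, smul_mulVec, one_mulVec,
    dotProduct_smul, dot_eigvec hA i, smul_eq_mul, mul_one] at h2
  linarith

lemma smul_one_eq_conj {U : Matrix n n ℝ} (hU : U ∈ Matrix.unitaryGroup n ℝ) (c : ℝ) :
    c • (1 : Matrix n n ℝ) = U * diagonal (fun _ => c) * star U := by
  have h1 : diagonal (fun _ : n => c) = c • (1 : Matrix n n ℝ) := by
    ext i j; by_cases h : i = j <;> simp [diagonal, h]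
  rw [h1, Matrix.mul_smul, smul_mul_assoc, mul_one, (mem_unitaryGroup_iff).mp hU]

lemma inv_eq_spectral {A : Matrix n n ℝ} (hA : A.PosDef) :
    A⁻¹ = (hA.1.eigenvectorUnitary : Matrix n n ℝ) *
        diagonal (fun i => (hA.1.eigenvalues i)⁻¹) *
        star (hA.1.eigenvectorUnitary : Matrix n n ℝ) := by
  apply inv_eq_right_inv
  nth_rewrite 1 [hA.1.spectral_theorem]
  have hμ : ∀ i, hA.1.eigenvalues i ≠ 0 := fun i => (hA.eigenvalues_pos i).ne'
  have hsU : star (hA.1.eigenvectorUnitary : Matrix n n ℝ) *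
      (hA.1.eigenvectorUnitary : Matrix n n ℝ) = 1 := mem_unitaryGroup_iff'.mp hA.1.eigenvectorUnitary.2
  have hd : diagonal (RCLike.ofReal ∘ hA.1.eigenvalues) *
      diagonal (fun i => (hA.1.eigenvalues i)⁻¹) = (1 : Matrix n n ℝ) := by
    rw [diagonal_mul_diagonal]
    have : (fun i => (RCLike.ofReal ∘ hA.1.eigenvalues) i * (hA.1.eigenvalues i)⁻¹)
        = fun _ : n => (1 : ℝ) := by
      funext i; simp [Function.comp, mul_inv_cancel₀ (hμ i)]
    rw [this, diagonal_one]
  calc (hA.1.eigenvectorUnitary : Matrix n n ℝ) * diagonal (RCLike.ofReal ∘ hA.1.eigenvalues) *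
        star (hA.1.eigenvectorUnitary : Matrix n n ℝ) *
        ((hA.1.eigenvectorUnitary : Matrix n n ℝ) * diagonal (fun i => (hA.1.eigenvalues i)⁻¹) *
        star (hA.1.eigenvectorUnitary : Matrix n n ℝ))
      = (hA.1.eigenvectorUnitary : Matrix n n ℝ) * (diagonal (RCLike.ofReal ∘ hA.1.eigenvalues) *
          ((star (hA.1.eigenvectorUnitary : Matrix n n ℝ) * (hA.1.eigenvectorUnitary : Matrix n n ℝ)) *
          (diagonal (fun i => (hA.1.eigenvalues i)⁻¹) *
          star (hA.1.eigenvectorUnitary : Matrix n n ℝ)))) := by noncomm_ring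
    _ = 1 := by
        rw [hsU, one_mul]
        simp only [← mul_assoc]
        rw [mul_assoc _ (diagonal (RCLike.ofReal ∘ hA.1.eigenvalues)) _, hd, mul_one,
          (mem_unitaryGroup_iff).mp hA.1.eigenvectorUnitary.2]

lemma conj_diag_psd (U : Matrix n n ℝ) {f : n → ℝ} (hf : ∀ i, 0 ≤ f i) :
    (U * diagonal f * star U).PosSemidef := by
  have := (PosSemidef.diagonal (fun i => hf i) :
    (diagonal f).PosSemidef).mul_mul_conjTranspose_same U
  simpa [Matrix.star_eq_conjTranspose] using this

lemma smul_one_sub_inv_psd {A : Matrix n n ℝ} (hA : A.PosDef) {c : ℝ}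
    (h : ∀ i, (hA.1.eigenvalues i)⁻¹ ≤ c) : (c • (1 : Matrix n n ℝ) - A⁻¹).PosSemidef := by
  rw [inv_eq_spectral hA, smul_one_eq_conj hA.1.eigenvectorUnitary.2 c,
    ← Matrix.sub_mul, ← Matrix.mul_sub, diagonal_sub]
  exact conj_diag_psd _ (fun i => by simpa using sub_nonneg.mpr (h i))

lemma inv_sub_smul_one_psd {A : Matrix n n ℝ} (hA : A.PosDef) {c : ℝ}
    (h : ∀ i, c ≤ (hA.1.eigenvalues i)⁻¹) : (A⁻¹ - c • (1 : Matrix n n ℝ)).PosSemidef := by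
  rw [inv_eq_spectral hA, smul_one_eq_conj hA.1.eigenvectorUnitary.2 c,
    ← Matrix.sub_mul, ← Matrix.mul_sub, diagonal_sub]
  exact conj_diag_psd _ (fun i => by simpa using sub_nonneg.mpr (h i))

lemma trace_eq_sum_eigs {A : Matrix n n ℝ} (hA : A.IsHermitian) :
    A.trace = ∑ i, hA.eigenvalues i := by
  nth_rewrite 1 [hA.spectral_theorem]
  rw [Unitary.conjStarAlgAut_apply, Matrix.trace_mul_cycle,
    mem_unitaryGroup_iff'.mp hA.eigenvectorUnitary.2, one_mul, trace_diagonal]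
  simp [Function.comp]

lemma trace_le_rank_mul {A : Matrix n n ℝ} (hA : A.IsHermitian) {c : ℝ} (hc : 0 ≤ c)
    (h : (c • (1 : Matrix n n ℝ) - A).PosSemidef) {r : ℕ} (hr : A.rank ≤ r) :
    A.trace ≤ (r : ℝ) * c := by
  rw [trace_eq_sum_eigs hA]
  rw [← Finset.sum_filter_ne_zero (f := fun i => hA.eigenvalues i) Finset.univ]
  have hcard : (Finset.univ.filter (fun i => hA.eigenvalues i ≠ 0)).card = A.rank := by
    rw [hA.rank_eq_card_non_zero_eigs, Fintype.card_subtype]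
  calc ∑ i ∈ Finset.univ.filter (fun i => hA.eigenvalues i ≠ 0), hA.eigenvalues i
      ≤ (Finset.univ.filter (fun i => hA.eigenvalues i ≠ 0)).card • c :=
        Finset.sum_le_card_nsmul _ _ c (fun i _ => eig_le_of_psd hA h i)
    _ = ((Finset.univ.filter (fun i => hA.eigenvalues i ≠ 0)).card : ℝ) * c := by
        rw [nsmul_eq_mul]
    _ ≤ (r : ℝ) * c := by
        apply mul_le_mul_of_nonneg_right _ hc
        exact_mod_cast hcard ▸ hr

end Helpers

/-- **Trace upper bound for low-rank PSD perturbations.** If `β²·I ⪯ B` with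
`β > 0`, `D` is positive semidefinite of rank at most `r`, and `B + D ⪯ M·I`
with `M ≥ β²`, then `tr(B⁻¹) − tr((B + D)⁻¹) ≤ r·(1/β² − 1/M)`. -/
theorem trace_inv_sub_trace_inv_le (d : ℕ) (B D : Matrix (Fin d) (Fin d) ℝ)
    (β : ℝ) (hβ : 0 < β)
    (hB : (B - β ^ 2 • (1 : Matrix (Fin d) (Fin d) ℝ)).PosSemidef)
    (hD : D.PosSemidef) (r : ℕ) (hr : D.rank ≤ r)
    (M : ℝ) (hM : β ^ 2 ≤ M)
    (hBDM : (M • (1 : Matrix (Fin d) (Fin d) ℝ) - (B + D)).PosSemidef) :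
    Matrix.trace B⁻¹ - Matrix.trace (B + D)⁻¹ ≤ (r : ℝ) * (1 / β ^ 2 - 1 / M) := by
  have hβ2 : (0 : ℝ) < β ^ 2 := by positivity
  have hM0 : (0 : ℝ) < M := lt_of_lt_of_le hβ2 hM
  -- B is positive definite
  have hone : (β ^ 2 • (1 : Matrix (Fin d) (Fin d) ℝ)).PosDef := by
    have : β ^ 2 • (1 : Matrix (Fin d) (Fin d) ℝ) = diagonal (fun _ => β ^ 2) := by
      ext i j; by_cases h : i = j <;> simp [diagonal, h]
    rw [this]
    exact posDef_diagonal_iff.mpr (fun _ => hβ2)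
  have hBpd : B.PosDef := by
    have := hone.add_posSemidef hB
    simpa using this
  have hBDpd : (B + D).PosDef := hBpd.add_posSemidef hD
  -- eigenvalue bounds
  have hBeig : ∀ i, β ^ 2 ≤ hBpd.1.eigenvalues i := fun i => le_eig_of_psd hBpd.1 hB i
  have hBDeig : ∀ i, hBDpd.1.eigenvalues i ≤ M := fun i => eig_le_of_psd hBDpd.1 hBDM i
  have h1 : ((β ^ 2)⁻¹ • (1 : Matrix (Fin d) (Fin d) ℝ) - B⁻¹).PosSemidef :=
    smul_one_sub_inv_psd hBpd (fun i =>
      inv_anti₀ hβ2 (hBeig i))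
  have h2 : ((B + D)⁻¹ - M⁻¹ • (1 : Matrix (Fin d) (Fin d) ℝ)).PosSemidef :=
    inv_sub_smul_one_psd hBDpd (fun i =>
      inv_anti₀ (hBDpd.eigenvalues_pos i) (hBDeig i))
  -- the difference matrix
  set Δ : Matrix (Fin d) (Fin d) ℝ := B⁻¹ - (B + D)⁻¹ with hΔdef
  have hΔherm : Δ.IsHermitian := hBpd.inv.1.sub hBDpd.inv.1
  set c : ℝ := (β ^ 2)⁻¹ - M⁻¹ with hc
  have hc0 : 0 ≤ c := by
    rw [hc, sub_nonneg]
    exact inv_anti₀ hβ2 hM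
  have hpsd : (c • (1 : Matrix (Fin d) (Fin d) ℝ) - Δ).PosSemidef := by
    have : c • (1 : Matrix (Fin d) (Fin d) ℝ) - Δ =
        ((β ^ 2)⁻¹ • (1 : Matrix (Fin d) (Fin d) ℝ) - B⁻¹) +
        ((B + D)⁻¹ - M⁻¹ • (1 : Matrix (Fin d) (Fin d) ℝ)) := by
      rw [hΔdef, hc, sub_smul]; abel
    rw [this]
    exact h1.add h2
  -- rank bound
  have hdet1 : IsUnit B.det := (Matrix.isUnit_iff_isUnit_det B).mp hBpd.isUnit
  have hdet2 : IsUnit (B + D).det := (Matrix.isUnit_iff_isUnit_det _).mp hBDpd.isUnit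
  have hfac : Δ = B⁻¹ * (D * (B + D)⁻¹) := by
    rw [hΔdef]
    calc B⁻¹ - (B + D)⁻¹
        = B⁻¹ * ((B + D) * (B + D)⁻¹) - (B⁻¹ * B) * (B + D)⁻¹ := by
          rw [mul_nonsing_inv _ hdet2, nonsing_inv_mul _ hdet1, mul_one, one_mul]
      _ = B⁻¹ * (D * (B + D)⁻¹) := by noncomm_ring
  have hrankΔ : Δ.rank ≤ r := by
    rw [hfac]
    exact le_trans (rank_mul_le_right _ _) (le_trans (rank_mul_le_left _ _) hr)
  have hfinal := trace_le_rank_mul hΔherm hc0 hpsd hrankΔ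
  rw [hΔdef, trace_sub] at hfinal
  simpa [hc, one_div] using hfinal
end

section
/- Let Σ be a real symmetric positive semidefinite n×n matrix and σ > 0. For S ⊆ {1,…,n}, let Σ_S denote the principal submatrix of Σ with rows and columns indexed by S, and define F(S) := det(I_{|S|} + σ^{−2}·Σ_S), with F(∅) := 1. Then F is supermodular: for all A ⊆ B ⊆ {1,…,n} and every i ∉ B, F(A ∪ {i}) − F(A) ≤ F(B ∪ {i}) − F(B). In particular, F has generalized curvature 0. -/
open Finset Matrix

/-- The determinantal objective `F(S) = det(I_{|S|} + σ⁻²·Σ_S)`, where `Σ_S` is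
the principal submatrix of `Sig` with rows and columns indexed by `S`
(for `S = ∅` this is the determinant of the empty matrix, namely `1`). -/
noncomputable def detObj (n : ℕ) (σ : ℝ) (Sig : Matrix (Fin n) (Fin n) ℝ)
    (S : Finset (Fin n)) : ℝ :=
  Matrix.det ((1 : Matrix S S ℝ) +
    (σ ^ 2)⁻¹ • Sig.submatrix (fun i : S => (i : Fin n)) (fun j : S => (j : Fin n)))


noncomputable def minorDet {m : Type*} [Fintype m] [DecidableEq m]
    (M : Matrix m m ℝ) (T : Finset m) : ℝ :=
  Matrix.det (M.submatrix (fun i : T => (i : m)) (fun j : T => (j : m)))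

lemma det_piecewise_one {m : Type*} [Fintype m] [DecidableEq m] (N : Matrix m m ℝ) (s : Finset m) :
    Matrix.det (s.piecewise N (1 : Matrix m m ℝ)) = minorDet N s := by
  classical
  rw [minorDet, ← Matrix.det_submatrix_equiv_self (Equiv.sumCompl (· ∈ s))
    (s.piecewise N (1 : Matrix m m ℝ))]
  have h : Matrix.submatrix (s.piecewise N (1 : Matrix m m ℝ))
      (Equiv.sumCompl (· ∈ s)) (Equiv.sumCompl (· ∈ s)) =
      Matrix.fromBlocks (N.submatrix (fun i : s => (i : m)) (fun j : s => (j : m)))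
        (N.submatrix (fun i : s => (i : m)) (fun j : {x // x ∉ s} => (j : m)))
        0 1 := by
    ext i j
    rcases i with i | i <;> rcases j with j | j
    · show (if (i : m) ∈ s then N i else (1 : Matrix m m ℝ) i) j = N i j
      simp [Finset.piecewise_eq_of_mem _ _ _ i.2]
    · show (if (i : m) ∈ s then N i else (1 : Matrix m m ℝ) i) j = N i j
      simp [Finset.piecewise_eq_of_mem _ _ _ i.2]
    · have hij : (i : m) ≠ (j : m) := fun h => i.2 (h ▸ j.2)
      show (if (i : m) ∈ s then N i else (1 : Matrix m m ℝ) i) j = 0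
      rw [if_neg i.2]
      simp [Finset.piecewise_eq_of_notMem _ _ _ i.2, Matrix.one_apply, hij]
    · show (if (i : m) ∈ s then N i else (1 : Matrix m m ℝ) i) j = (1 : Matrix _ _ ℝ) i j
      rw [if_neg i.2]
      simp [Finset.piecewise_eq_of_notMem _ _ _ i.2, Matrix.one_apply, Subtype.ext_iff]
  rw [h, Matrix.det_fromBlocks_zero₂₁, Matrix.det_one, mul_one]

lemma det_one_add_expand {m : Type*} [Fintype m] [DecidableEq m] (N : Matrix m m ℝ) :
    Matrix.det (1 + N) = ∑ s : Finset m, minorDet N s := by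
  classical
  have h := (Matrix.detRowAlternating (n := m) (R := ℝ)).toMultilinearMap.map_add_univ
    N (1 : Matrix m m ℝ)
  have h2 : Matrix.det (N + 1) =
      ∑ s : Finset m, Matrix.det (s.piecewise N (1 : Matrix m m ℝ)) := h
  rw [add_comm, h2]
  exact Finset.sum_congr rfl fun s _ => det_piecewise_one N s

lemma minor_of_map {n : ℕ} (M : Matrix (Fin n) (Fin n) ℝ) (S : Finset (Fin n))
    (s : Finset ↥S) :
    minorDet (M.submatrix (fun i : S => (i : Fin n)) (fun j : S => (j : Fin n))) s =
      minorDet M (s.map (Function.Embedding.subtype _)) := by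
  classical
  have he : ∀ x : ↥s, (x : ↥S).val ∈ s.map (Function.Embedding.subtype fun x => x ∈ S) :=
    fun x => Finset.mem_map.mpr ⟨(x : ↥S), x.2, rfl⟩
  let f : ↥s → ↥(s.map (Function.Embedding.subtype fun x => x ∈ S)) := fun x => ⟨(x : ↥S).val, he x⟩
  have hf : Function.Bijective f := by
    constructor
    · intro a b h
      have h1 := congrArg Subtype.val h
      exact Subtype.ext (Subtype.ext h1)
    · intro y
      obtain ⟨b, hb, hby⟩ := Finset.mem_map.mp y.2
      exact ⟨⟨b, hb⟩, Subtype.ext hby⟩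
  have := Matrix.det_submatrix_equiv_self (Equiv.ofBijective f hf)
    (M.submatrix (fun i : ↥(s.map (Function.Embedding.subtype fun x => x ∈ S)) => (i : Fin n))
      (fun j : ↥(s.map (Function.Embedding.subtype fun x => x ∈ S)) => (j : Fin n)))
  rw [minorDet, minorDet, ← this]
  rfl

lemma expand_powerset {n : ℕ} (M : Matrix (Fin n) (Fin n) ℝ) (S : Finset (Fin n)) :
    Matrix.det ((1 : Matrix S S ℝ) +
        M.submatrix (fun i : S => (i : Fin n)) (fun j : S => (j : Fin n))) =
      ∑ T ∈ S.powerset, minorDet M T := by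
  classical
  rw [det_one_add_expand]
  refine Finset.sum_nbij' (i := fun s : Finset ↥S => s.map (Function.Embedding.subtype _))
    (j := fun T => T.subtype (· ∈ S)) ?_ ?_ ?_ ?_ ?_
  · intro s _
    simp only [Finset.mem_powerset, Finset.subset_iff]
    intro x hx
    rw [Finset.mem_map] at hx
    obtain ⟨b, _, rfl⟩ := hx
    exact b.2
  · intro T _
    exact Finset.mem_univ _
  · intro s _
    ext a
    simp [Finset.mem_subtype, Finset.mem_map]
  · intro T hT
    simp only [Finset.subtype_map]
    exact Finset.filter_true_of_mem fun x hx => Finset.mem_powerset.mp hT hx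
  · intro s _
    exact minor_of_map M S s

lemma smul_posSemidef {n : ℕ} {M : Matrix (Fin n) (Fin n) ℝ} (hM : M.PosSemidef)
    {c : ℝ} (hc : 0 ≤ c) : (c • M).PosSemidef := by
  constructor
  · unfold Matrix.IsHermitian
    rw [Matrix.conjTranspose_smul, hM.1]
    simp
  · intro x
    exact (hM.smul hc).2 x

lemma minorDet_nonneg {n : ℕ} {M : Matrix (Fin n) (Fin n) ℝ} (hM : M.PosSemidef)
    (T : Finset (Fin n)) : 0 ≤ minorDet M T := by
  have h := hM.submatrix (fun i : T => (i : Fin n))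
  rw [minorDet, h.isHermitian.det_eq_prod_eigenvalues]
  exact Finset.prod_nonneg fun i _ => by exact_mod_cast h.eigenvalues_nonneg i

/-- **The determinantal function is supermodular** (hence has generalized
curvature `0`): for `Sig` positive semidefinite and `σ > 0`,
`F(A ∪ {i}) − F(A) ≤ F(B ∪ {i}) − F(B)` whenever `A ⊆ B` and `i ∉ B`; in
particular `ρ_i((S\{i}) ∪ Ω) ≥ ρ_i(S\{i})` for all `Ω, S` and `i ∈ S\Ω`. -/
theorem detObj_supermodular (n : ℕ) (σ : ℝ) (hσ : 0 < σ)
    (Sig : Matrix (Fin n) (Fin n) ℝ) (hSig : Sig.PosSemidef) :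
    (∀ A B : Finset (Fin n), ∀ i : Fin n, A ⊆ B → i ∉ B →
      detObj n σ Sig (insert i A) - detObj n σ Sig A ≤
        detObj n σ Sig (insert i B) - detObj n σ Sig B) ∧
    (∀ Ω S : Finset (Fin n), ∀ i ∈ S, i ∉ Ω →
      detObj n σ Sig (insert i ((S.erase i) ∪ Ω)) - detObj n σ Sig ((S.erase i) ∪ Ω) ≥
        (1 - 0) * (detObj n σ Sig S - detObj n σ Sig (S.erase i))) := by
  classical
  set M : Matrix (Fin n) (Fin n) ℝ := (σ ^ 2)⁻¹ • Sig with hMdef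
  have hM : M.PosSemidef := smul_posSemidef hSig (by positivity)
  have hobj : ∀ S : Finset (Fin n), detObj n σ Sig S = ∑ T ∈ S.powerset, minorDet M T := by
    intro S
    have hsub : (σ ^ 2)⁻¹ • Sig.submatrix (fun i : S => (i : Fin n)) (fun j : S => (j : Fin n)) =
        M.submatrix (fun i : S => (i : Fin n)) (fun j : S => (j : Fin n)) := by
      ext a b
      simp [hMdef]
    rw [detObj, hsub, expand_powerset]
  have hdiff : ∀ (A : Finset (Fin n)) (i : Fin n), i ∉ A →
      detObj n σ Sig (insert i A) - detObj n σ Sig A =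
        ∑ T ∈ A.powerset, minorDet M (insert i T) := by
    intro A i hiA
    have hdisj : Disjoint A.powerset (A.powerset.image (insert i)) := by
      rw [Finset.disjoint_left]
      intro T hT hT'
      obtain ⟨T', hT', rfl⟩ := Finset.mem_image.mp hT'
      exact hiA (Finset.mem_powerset.mp hT (Finset.mem_insert_self i T'))
    rw [hobj, hobj, Finset.powerset_insert, Finset.sum_union hdisj,
      Finset.sum_image (fun T hT T' hT' h => by
        have hi : i ∉ T := fun hi => hiA (Finset.mem_powerset.mp hT hi)
        have hi' : i ∉ T' := fun hi => hiA (Finset.mem_powerset.mp hT' hi)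
        rw [← Finset.erase_insert hi, ← Finset.erase_insert hi', h]),
      add_sub_cancel_left]
  constructor
  · intro A B i hAB hiB
    rw [hdiff A i (fun h => hiB (hAB h)), hdiff B i hiB]
    exact Finset.sum_le_sum_of_subset_of_nonneg (Finset.powerset_mono.mpr hAB)
      (fun T _ _ => minorDet_nonneg hM _)
  · intro Ω S i hiS hiΩ
    have hiB : i ∉ S.erase i ∪ Ω := by
      simp [Finset.mem_union, Finset.notMem_erase, hiΩ]
    have h1 : detObj n σ Sig (insert i (S.erase i)) - detObj n σ Sig (S.erase i) ≤
        detObj n σ Sig (insert i (S.erase i ∪ Ω)) - detObj n σ Sig (S.erase i ∪ Ω) := by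
      rw [hdiff _ i (Finset.notMem_erase i S), hdiff _ i hiB]
      exact Finset.sum_le_sum_of_subset_of_nonneg
        (Finset.powerset_mono.mpr Finset.subset_union_left)
        (fun T _ _ => minorDet_nonneg hM _)
    rw [Finset.insert_erase hiS] at h1
    linarith
end
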